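/- arXiv:2501.07698 — 4 statements merged into one kernel-verified Lean document; each statement's English description precedes it below -/
import Mathlib

section
/- The circle graph 𝒞 is not edge-transitive: there exist edges e and f of 𝒞 such that no automorphism of 𝒞 maps e to f. Specifically, no automorphism maps an edge consisting of two chords sharing an endpoint on S¹ to an edge consisting of two chords that intersect only at an interior point of the unit disc. -/
noncomputable section

/-- The unit circle in the complex plane. -/
def S1 : Set ℂ := {z : ℂ | ‖z‖ = 1}

/-- The closed segment in the plane spanned by an unordered pair of points. -/
def chordSegment : Sym2 ℂ → Set ℂ :=
  Sym2.lift ⟨fun a b => segment ℝ a b, fun a b => segment_symm ℝ a b⟩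

/-- A chord of the circle: an unordered pair of two distinct points of `S1`. -/
def Chord : Type := {p : Sym2 ℂ // (∀ z ∈ p, z ∈ S1) ∧ ¬ p.IsDiag}

/-- The circle graph: vertices are the chords of the circle, two distinct chords being
adjacent whenever their segments intersect. -/
def CircleGraph : SimpleGraph Chord where
  Adj C D := C ≠ D ∧ (chordSegment C.1 ∩ chordSegment D.1).Nonempty
  symm := ⟨fun C D ⟨h1, h2⟩ => ⟨h1.symm, by rwa [Set.inter_comm]⟩⟩
  loopless := ⟨fun C h => h.1 rfl⟩

/-- Two chords are *incident* if they share an endpoint on the circle. -/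
def Incident (C D : Chord) : Prop := ∃ z : ℂ, z ∈ C.1 ∧ z ∈ D.1


namespace CG

def cross (u v : ℂ) : ℝ := u.re * v.im - u.im * v.re

def dot (u v : ℂ) : ℝ := u.re * v.re + u.im * v.im

lemma coords_of_norm_eq {z : ℂ} (h : ‖z‖ = 1) : z.re ^ 2 + z.im ^ 2 = 1 := by
  have : ‖z‖ ^ 2 = Complex.normSq z := by
    rw [Complex.sq_norm]
  rw [h] at this
  rw [Complex.normSq_apply] at this
  nlinarith [this]

lemma coords_of_norm_le {z : ℂ} (h : ‖z‖ ≤ 1) : z.re ^ 2 + z.im ^ 2 ≤ 1 := by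
  have h2 : ‖z‖ ^ 2 = Complex.normSq z := by
    rw [Complex.sq_norm]
  rw [Complex.normSq_apply] at h2
  nlinarith [norm_nonneg z]

lemma mem_seg {p q x : ℂ} :
    x ∈ segment ℝ p q ↔ ∃ t : ℝ, 0 ≤ t ∧ t ≤ 1 ∧ x = (1 - t) • p + t • q := by
  rw [segment_eq_image]
  constructor
  · rintro ⟨t, ⟨h0, h1⟩, rfl⟩; exact ⟨t, h0, h1, rfl⟩
  · rintro ⟨t, h0, h1, rfl⟩; exact ⟨t, ⟨h0, h1⟩, rfl⟩

lemma combo_re (t : ℝ) (p q : ℂ) : ((1 - t) • p + t • q).re = (1 - t) * p.re + t * q.re := by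
  simp [Complex.add_re, Complex.real_smul, Complex.mul_re]

lemma combo_im (t : ℝ) (p q : ℂ) : ((1 - t) • p + t • q).im = (1 - t) * p.im + t * q.im := by
  simp [Complex.add_im, Complex.real_smul, Complex.mul_im]

lemma norm_le_of_mem_seg {p q x : ℂ} (hp : ‖p‖ = 1) (hq : ‖q‖ = 1)
    (hx : x ∈ segment ℝ p q) : ‖x‖ ≤ 1 := by
  have := (convex_closedBall (0:ℂ) 1).segment_subset
    (by simp [Metric.mem_closedBall, hp.le, dist_zero_right, hp])
    (by simp [Metric.mem_closedBall, dist_zero_right, hq]) hx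
  simpa [Metric.mem_closedBall, dist_zero_right] using this

lemma cross_seg {n z p q y : ℂ} (hy : y ∈ segment ℝ p q) :
    ∃ t : ℝ, 0 ≤ t ∧ t ≤ 1 ∧
      cross n (y - z) = (1 - t) * cross n (p - z) + t * cross n (q - z) := by
  obtain ⟨t, h0, h1, rfl⟩ := mem_seg.mp hy
  refine ⟨t, h0, h1, ?_⟩
  simp only [cross, Complex.sub_re, Complex.sub_im, combo_re, combo_im]
  ring

lemma ne_coords {a c : ℂ} (h : a ≠ c) : 0 < (c.re - a.re) ^ 2 + (c.im - a.im) ^ 2 := by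
  rcases (by rwa [Ne, Complex.ext_iff, not_and_or] at h : a.re ≠ c.re ∨ a.im ≠ c.im) with h' | h'
  · nlinarith [sq_nonneg (c.im - a.im), sq_pos_of_ne_zero (sub_ne_zero.mpr (Ne.symm h'))]
  · nlinarith [sq_nonneg (c.re - a.re), sq_pos_of_ne_zero (sub_ne_zero.mpr (Ne.symm h'))]

/-- A point of the closed disc on the line through two circle points lies on the chord. -/

lemma mem_chord_of_cross_eq_zero {a c w : ℂ} (ha : ‖a‖ = 1) (hc : ‖c‖ = 1) (hac : a ≠ c)
    (hw : ‖w‖ ≤ 1) (h : cross (c - a) (w - a) = 0) : w ∈ segment ℝ a c := by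
  have ha' := coords_of_norm_eq ha
  have hc' := coords_of_norm_eq hc
  have hw' := coords_of_norm_le hw
  have hN : 0 < (c.re - a.re) ^ 2 + (c.im - a.im) ^ 2 := ne_coords hac
  set N : ℝ := (c.re - a.re) ^ 2 + (c.im - a.im) ^ 2 with hNdef
  set t : ℝ := ((c.re - a.re) * (w.re - a.re) + (c.im - a.im) * (w.im - a.im)) / N with htdef
  have hcr : (c.re - a.re) * (w.im - a.im) - (c.im - a.im) * (w.re - a.re) = 0 := by
    simpa [cross, Complex.sub_re, Complex.sub_im] using h
  have hre : w.re = (1 - t) * a.re + t * c.re := by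
    rw [htdef]; field_simp
    linear_combination (w.re - a.re) * hNdef - (c.im - a.im) * hcr
  have him : w.im = (1 - t) * a.im + t * c.im := by
    rw [htdef]; field_simp
    linear_combination (w.im - a.im) * hNdef + (c.re - a.re) * hcr
  have hw'' : ((1-t)*a.re + t*c.re)^2 + ((1-t)*a.im + t*c.im)^2 ≤ 1 := by
    rw [← hre, ← him]; exact hw'
  have hNt : N * (t*(t-1)) =
      (((1-t)*a.re + t*c.re)^2 + ((1-t)*a.im + t*c.im)^2) - 1 := by
    linear_combination (t*(t-1))*hNdef + (t-1)*ha' - t*hc'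
  have hquad : N * (t * (t - 1)) ≤ 0 := by rw [hNt]; linarith
  have htt : t * (t - 1) ≤ 0 := by
    by_contra hcon; push_neg at hcon; nlinarith [mul_pos hN hcon]
  have ht01 : 0 ≤ t ∧ t ≤ 1 := by
    constructor
    · by_contra hcon; push_neg at hcon; nlinarith [htt]
    · by_contra hcon; push_neg at hcon; nlinarith [htt]
  exact mem_seg.mpr ⟨t, ht01.1, ht01.2, by
    apply Complex.ext
    · rw [combo_re]; exact hre
    · rw [combo_im]; exact him⟩

/-- Strict convexity: a norm-one point of a chord is an endpoint. -/

lemma endpoint_of_norm_eq_one {a c w : ℂ} (ha : ‖a‖ = 1) (hc : ‖c‖ = 1) (hw : ‖w‖ = 1)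
    (hmem : w ∈ segment ℝ a c) : w = a ∨ w = c := by
  obtain ⟨t, h0, h1, rfl⟩ := mem_seg.mp hmem
  have ha' := coords_of_norm_eq ha
  have hc' := coords_of_norm_eq hc
  have hw' := coords_of_norm_eq hw
  rw [combo_re t a c, combo_im t a c] at hw'
  rcases eq_or_lt_of_le h0 with h0' | h0'
  · left; apply Complex.ext <;> simp [combo_re, combo_im, ← h0']
  rcases eq_or_lt_of_le h1 with h1' | h1'
  · right; apply Complex.ext <;> simp [combo_re, combo_im, h1']
  -- interior: a = c
  have hD : (a.re - c.re) ^ 2 + (a.im - c.im) ^ 2 = 0 := by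
    nlinarith [mul_pos h0' (sub_pos.mpr h1')]
  have hac : a = c := by
    apply Complex.ext <;> nlinarith [sq_nonneg (a.re - c.re), sq_nonneg (a.im - c.im)]
  left
  apply Complex.ext <;> rw [hac] <;> simp [combo_re, combo_im] <;> ring

lemma cross_combo (n z p q : ℂ) (t : ℝ) :
    cross n ((1 - t) • p + t • q - z) = (1 - t) * cross n (p - z) + t * cross n (q - z) := by
  simp only [cross, Complex.sub_re, Complex.sub_im, combo_re, combo_im]; ring

lemma strict_side_of_disjoint {a c p q : ℂ} (ha : ‖a‖ = 1) (hc : ‖c‖ = 1) (hac : a ≠ c)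
    (hp : ‖p‖ = 1) (hq : ‖q‖ = 1)
    (hdisj : ∀ y, y ∈ segment ℝ p q → y ∈ segment ℝ a c → False) :
    0 < cross (c - a) (p - a) * cross (c - a) (q - a) := by
  have hp1 : ‖p‖ ≤ 1 := hp.le
  have hq1 : ‖q‖ ≤ 1 := hq.le
  have hFp : cross (c - a) (p - a) ≠ 0 := by
    intro h0
    exact hdisj p (left_mem_segment ℝ p q) (mem_chord_of_cross_eq_zero ha hc hac hp1 h0)
  have hFq : cross (c - a) (q - a) ≠ 0 := by
    intro h0
    exact hdisj q (right_mem_segment ℝ p q) (mem_chord_of_cross_eq_zero ha hc hac hq1 h0)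
  rcases lt_trichotomy (cross (c - a) (p - a) * cross (c - a) (q - a)) 0 with hlt | heq | hgt
  · exfalso
    set Fp := cross (c - a) (p - a) with hFpd
    set Fq := cross (c - a) (q - a) with hFqd
    have hne : Fp - Fq ≠ 0 := by
      intro h0
      have heq : Fp = Fq := by linarith [sub_eq_zero.mp h0]
      rw [heq] at hlt
      nlinarith [mul_self_nonneg Fq]
    set t : ℝ := Fp / (Fp - Fq) with htd
    have ht0 : 0 ≤ t ∧ t ≤ 1 := by
      rcases lt_trichotomy Fp 0 with h1 | h1 | h1
      · have h2 : 0 < Fq := by nlinarith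
        have hd : 0 < Fq - Fp := by linarith
        have ht' : t = (-Fp) / (Fq - Fp) := by
          rw [htd, div_eq_div_iff (ne_of_lt (show Fp - Fq < 0 by linarith)) (ne_of_gt hd)]
          ring
        constructor
        · rw [ht']; exact div_nonneg (by linarith) hd.le
        · rw [ht', div_le_one hd]; linarith
      · exact absurd h1 hFp
      · have h2 : Fq < 0 := by nlinarith
        have hd : 0 < Fp - Fq := by linarith
        constructor
        · rw [htd]; exact div_nonneg h1.le hd.le
        · rw [htd, div_le_one hd]; linarith
    set y : ℂ := (1 - t) • p + t • q with hyd
    have hymem : y ∈ segment ℝ p q := mem_seg.mpr ⟨t, ht0.1, ht0.2, rfl⟩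
    have hy1 : ‖y‖ ≤ 1 := norm_le_of_mem_seg hp hq hymem
    have hFy : cross (c - a) (y - a) = 0 := by
      rw [hyd, cross_combo, ← hFpd, ← hFqd, htd]
      field_simp
      ring
    exact hdisj y hymem (mem_chord_of_cross_eq_zero ha hc hac hy1 hFy)
  · exact absurd (mul_eq_zero.mp heq) (by push_neg; exact ⟨hFp, hFq⟩)
  · exact hgt

lemma one_sub_dot_pos {z a : ℂ} (hz : ‖z‖ = 1) (ha : ‖a‖ = 1) (haz : a ≠ z) :
    0 < 1 - dot z a := by
  have h1 := coords_of_norm_eq hz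
  have h2 := coords_of_norm_eq ha
  have h3 := ne_coords haz
  simp only [dot]
  nlinarith [h3]

/-- Rotation identity: decompose `cross u x` in the frame of a unit vector `z`. -/

lemma cross_rot {z : ℂ} (hz : z.re ^ 2 + z.im ^ 2 = 1) (u x : ℂ) :
    cross u x = dot z u * cross z x - cross z u * dot z x := by
  simp only [cross, dot]
  linear_combination (-(u.re * x.im - u.im * x.re)) * hz

/-- No circle point lies in the "fourth quadrant" of two chords emanating from `z`. -/

lemma no_fourth_region {z a b w : ℂ} (hz : ‖z‖ = 1) (ha : ‖a‖ = 1) (hb : ‖b‖ = 1)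
    (hw : ‖w‖ = 1) :
    ¬ (cross (a - z) (w - z) * cross (a - z) (b - z) < 0 ∧
       cross (b - z) (w - z) * cross (b - z) (a - z) < 0) := by
  rintro ⟨h1, h2⟩
  have haz : a ≠ z := by
    rintro rfl; rw [sub_self] at h1; simp [cross] at h1
  have hbz : b ≠ z := by
    rintro rfl; rw [sub_self] at h2; simp [cross] at h2
  have hwz : w ≠ z := by
    rintro rfl; rw [sub_self] at h1; simp [cross] at h1
  have hz' := coords_of_norm_eq hz
  set U1 : ℝ := 1 - dot z a with hU1
  set V1 : ℝ := 1 - dot z b with hV1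
  set X1 : ℝ := 1 - dot z w with hX1
  have hU1p : 0 < U1 := one_sub_dot_pos hz ha haz
  have hV1p : 0 < V1 := one_sub_dot_pos hz hb hbz
  have hX1p : 0 < X1 := one_sub_dot_pos hz hw hwz
  set U2 : ℝ := cross z (a - z) with hU2
  set V2 : ℝ := cross z (b - z) with hV2
  set X2 : ℝ := cross z (w - z) with hX2
  have hda : dot z (a - z) = -U1 := by simp only [dot, hU1, Complex.sub_re, Complex.sub_im]; nlinarith [hz']
  have hdb : dot z (b - z) = -V1 := by simp only [dot, hV1, Complex.sub_re, Complex.sub_im]; nlinarith [hz']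
  have hdw : dot z (w - z) = -X1 := by simp only [dot, hX1, Complex.sub_re, Complex.sub_im]; nlinarith [hz']
  have e1 : cross (a - z) (w - z) = U2 * X1 - U1 * X2 := by
    rw [cross_rot hz' (a - z) (w - z), hda, hdw, ← hU2, ← hX2]; ring
  have e2 : cross (a - z) (b - z) = U2 * V1 - U1 * V2 := by
    rw [cross_rot hz' (a - z) (b - z), hda, hdb, ← hU2, ← hV2]; ring
  have e3 : cross (b - z) (w - z) = V2 * X1 - V1 * X2 := by
    rw [cross_rot hz' (b - z) (w - z), hdb, hdw, ← hV2, ← hX2]; ring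
  have e4 : cross (b - z) (a - z) = V2 * U1 - V1 * U2 := by
    rw [cross_rot hz' (b - z) (a - z), hdb, hda, ← hV2, ← hU2]; ring
  rw [e1, e2] at h1
  rw [e3, e4] at h2
  set K : ℝ := U2 * V1 - U1 * V2 with hK
  set P : ℝ := U2 * X1 - U1 * X2 with hP
  set Q : ℝ := V2 * X1 - V1 * X2 with hQ
  have h1' : P * K < 0 := by rw [hP, hK]; exact h1
  have h2' : 0 < Q * K := by rw [hQ] at h2 ⊢; rw [hK]; nlinarith [h2]
  have c1 : V1 * (P * K) < 0 := mul_neg_of_pos_of_neg hV1p h1'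
  have c2 : 0 < U1 * (Q * K) := mul_pos hU1p h2'
  have c3 : V1 * (P * K) - U1 * (Q * K) = X1 * (K * K) := by ring
  have c4 : 0 ≤ X1 * (K * K) := mul_nonneg hX1p.le (mul_self_nonneg K)
  linarith

lemma cross_smul_right (u : ℂ) (t : ℝ) (v : ℂ) : cross u (t • v) = t * cross u v := by
  simp only [cross, Complex.real_smul, Complex.mul_re, Complex.mul_im, Complex.ofReal_re,
    Complex.ofReal_im]; ring

lemma dot_smul_right (u : ℂ) (t : ℝ) (v : ℂ) : dot u (t • v) = t * dot u v := by
  simp only [dot, Complex.real_smul, Complex.mul_re, Complex.mul_im, Complex.ofReal_re,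
    Complex.ofReal_im]; ring

lemma ray_circle {p e : ℂ} (hp : ‖p‖ < 1) (he : e ≠ 0) :
    ∃ t : ℝ, 0 < t ∧ ‖p + t • e‖ = 1 := by
  have heT : 0 < ‖e‖ := norm_pos_iff.mpr he
  set T : ℝ := (1 + ‖p‖) / ‖e‖ with hTd
  have hT : 0 < T := by positivity
  have hcont : Continuous fun t : ℝ => ‖p + t • e‖ := by
    exact (continuous_const.add (continuous_id.smul continuous_const)).norm
  have hT1 : 1 ≤ ‖p + T • e‖ := by
    have h1 : ‖T • e‖ ≤ ‖p + T • e‖ + ‖p‖ := by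
      calc ‖T • e‖ = ‖(p + T • e) - p‖ := by rw [add_sub_cancel_left]
      _ ≤ ‖p + T • e‖ + ‖p‖ := norm_sub_le _ _
    have h2 : ‖T • e‖ = T * ‖e‖ := by rw [norm_smul, Real.norm_of_nonneg hT.le]
    have h3 : T * ‖e‖ = 1 + ‖p‖ := by rw [hTd]; exact div_mul_cancel₀ _ (ne_of_gt heT)
    linarith
  have hIVT := intermediate_value_Icc (le_of_lt hT) hcont.continuousOn
  have h1mem : (1:ℝ) ∈ Set.Icc ‖p + (0:ℝ) • e‖ ‖p + T • e‖ := by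
    simp only [zero_smul, add_zero]; exact ⟨hp.le, hT1⟩
  obtain ⟨t, ht, h⟩ := hIVT h1mem
  refine ⟨t, ?_, h⟩
  rcases eq_or_lt_of_le ht.1 with h0 | h0
  · exfalso; rw [← h0] at h; simp only [zero_smul, add_zero] at h
    rw [h] at hp; exact lt_irrefl _ hp
  · exact h0

/-- Two distinct circle points strictly inside a given "quadrant" seen from an interior
point `p`. -/

lemma quadrant_points {p : ℂ} (hp : ‖p‖ < 1) {m1 m2 : ℂ} (hcr : cross m1 m2 ≠ 0) :
    ∃ w1 w2 : ℂ, w1 ≠ w2 ∧ ‖w1‖ = 1 ∧ ‖w2‖ = 1 ∧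
      0 < dot m1 (w1 - p) ∧ 0 < dot m2 (w1 - p) ∧
      0 < dot m1 (w2 - p) ∧ 0 < dot m2 (w2 - p) := by
  have hκ : cross m1 m2 ≠ 0 := hcr
  set κ : ℝ := cross m1 m2 with hκd
  set e1 : ℂ := (((m2.im - m1.im) / κ : ℝ) : ℂ) + (((m1.re - m2.re) / κ : ℝ) : ℂ) * Complex.I with he1d
  set e2 : ℂ := (((m2.im - 2*m1.im) / κ : ℝ) : ℂ) + (((2*m1.re - m2.re) / κ : ℝ) : ℂ) * Complex.I with he2d
  have hκ' : κ ≠ 0 := hκ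
  have hκexp : κ = m1.re * m2.im - m1.im * m2.re := by rw [hκd]; rfl
  have he1re : e1.re = (m2.im - m1.im) / κ := by
    rw [he1d]; simp
  have he1im : e1.im = (m1.re - m2.re) / κ := by
    rw [he1d]; simp
  have he2re : e2.re = (m2.im - 2*m1.im) / κ := by
    rw [he2d]; simp
  have he2im : e2.im = (2*m1.re - m2.re) / κ := by
    rw [he2d]; simp
  have hd11 : dot m1 e1 = 1 := by
    simp only [dot, he1re, he1im]; field_simp; linarith [hκexp]
  have hd21 : dot m2 e1 = 1 := by
    simp only [dot, he1re, he1im]; field_simp; linarith [hκexp]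
  have hd12 : dot m1 e2 = 1 := by
    simp only [dot, he2re, he2im]; field_simp; linarith [hκexp]
  have hd22 : dot m2 e2 = 2 := by
    simp only [dot, he2re, he2im]; field_simp; linarith [hκexp]
  have hc12 : cross e1 e2 = 1 / κ := by
    simp only [cross, he1re, he1im, he2re, he2im]
    rw [div_mul_div_comm, div_mul_div_comm, div_sub_div_same, div_eq_div_iff (by positivity) hκ']
    linear_combination (-κ) * hκexp
  have he1ne : e1 ≠ 0 := by
    rintro h; rw [h] at hd11; simp [dot] at hd11
  have he2ne : e2 ≠ 0 := by
    rintro h; rw [h] at hd12; simp [dot] at hd12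
  obtain ⟨t1, ht1, hw1⟩ := ray_circle hp he1ne
  obtain ⟨t2, ht2, hw2⟩ := ray_circle hp he2ne
  refine ⟨p + t1 • e1, p + t2 • e2, ?_, hw1, hw2, ?_, ?_, ?_, ?_⟩
  · intro h
    have heq : t1 • e1 = t2 • e2 := by
      have := congrArg (fun x => x - p) h
      simpa [add_sub_cancel_left] using this
    have h1 := congrArg (cross e1) heq
    rw [cross_smul_right, cross_smul_right, hc12] at h1
    have hself : cross e1 e1 = 0 := by simp [cross]; ring
    rw [hself, mul_zero] at h1
    have : t2 = 0 := by
      field_simp at h1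
      linarith
    exact absurd this (ne_of_gt ht2)
  · rw [add_sub_cancel_left, dot_smul_right, hd11]; linarith
  · rw [add_sub_cancel_left, dot_smul_right, hd21]; linarith
  · rw [add_sub_cancel_left, dot_smul_right, hd12]; linarith
  · rw [add_sub_cancel_left, dot_smul_right, hd22]; linarith

lemma adj_iff {C D : Chord} :
    CircleGraph.Adj C D ↔ C ≠ D ∧ (chordSegment C.1 ∩ chordSegment D.1).Nonempty := Iff.rfl

lemma chordSegment_mk (a b : ℂ) : chordSegment s(a, b) = segment ℝ a b := rfl

def mkChord (u v : ℂ) (hu : ‖u‖ = 1) (hv : ‖v‖ = 1) (huv : u ≠ v) : Chord :=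
  ⟨s(u, v), by
    constructor
    · intro z hz
      rcases Sym2.mem_iff.mp hz with rfl | rfl
      · exact hu
      · exact hv
    · rw [Sym2.mk_isDiag_iff]; exact huv⟩

lemma mkChord_seg (u v : ℂ) (hu : ‖u‖ = 1) (hv : ‖v‖ = 1) (huv : u ≠ v) :
    chordSegment (mkChord u v hu hv huv).1 = segment ℝ u v := rfl

lemma chord_rep (C : Chord) : ∃ u v : ℂ, C.1 = s(u, v) ∧ ‖u‖ = 1 ∧ ‖v‖ = 1 ∧ u ≠ v := by
  obtain ⟨⟨u, v⟩, h⟩ := Quot.exists_rep C.1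
  have h' : C.1 = s(u, v) := h.symm
  refine ⟨u, v, h', ?_, ?_, ?_⟩
  · exact C.2.1 u (by rw [h']; exact Sym2.mem_mk_left u v)
  · exact C.2.1 v (by rw [h']; exact Sym2.mem_mk_right u v)
  · intro huv
    exact C.2.2 (by rw [h', Sym2.mk_isDiag_iff]; exact huv)

/-- `F` is a "non-neighbour" of the edge `{C, D}`. -/

def NN (C D F : Chord) : Prop :=
  ¬ CircleGraph.Adj F C ∧ ¬ CircleGraph.Adj F D ∧ F ≠ C ∧ F ≠ D

/-- The graph-theoretic invariant distinguishing crossing edges from incident ones: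
there are four pairwise distinct, pairwise non-adjacent non-neighbours of the edge
such that no non-neighbour of the edge is adjacent to two of them. -/

def P (C D : Chord) : Prop :=
  ∃ E : Fin 4 → Chord,
    (∀ i j, i ≠ j → E i ≠ E j ∧ ¬ CircleGraph.Adj (E i) (E j)) ∧
    (∀ i, NN C D (E i)) ∧
    (∀ F, NN C D F → ∀ i j, i ≠ j →
      ¬ (CircleGraph.Adj F (E i) ∧ CircleGraph.Adj F (E j)))

lemma P_map (h : CircleGraph ≃g CircleGraph) (C D : Chord) (hP : P C D) : P (h C) (h D) := by
  obtain ⟨E, hE1, hE2, hE3⟩ := hP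
  refine ⟨fun i => h (E i), ?_, ?_, ?_⟩
  · intro i j hij
    refine ⟨fun hc => (hE1 i j hij).1 (h.injective hc), fun hc => (hE1 i j hij).2 ?_⟩
    rwa [h.map_adj_iff] at hc
  · intro i
    obtain ⟨n1, n2, n3, n4⟩ := hE2 i
    exact ⟨fun hc => n1 (by rwa [h.map_adj_iff] at hc),
           fun hc => n2 (by rwa [h.map_adj_iff] at hc),
           fun hc => n3 (h.injective hc), fun hc => n4 (h.injective hc)⟩
  · intro F hF i j hij hc
    have hF' : NN C D (h.symm F) := by
      obtain ⟨n1, n2, n3, n4⟩ := hF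
      refine ⟨fun hc => n1 ?_, fun hc => n2 ?_, fun hc => n3 ?_, fun hc => n4 ?_⟩
      · rw [← h.map_adj_iff] at hc; rwa [h.apply_symm_apply] at hc
      · rw [← h.map_adj_iff] at hc; rwa [h.apply_symm_apply] at hc
      · rw [← hc, h.apply_symm_apply]
      · rw [← hc, h.apply_symm_apply]
    refine hE3 (h.symm F) hF' i j hij ⟨?_, ?_⟩
    · rw [← h.map_adj_iff (v := h.symm F), h.apply_symm_apply] at *; exact hc.1
    · rw [← h.map_adj_iff (v := h.symm F), h.apply_symm_apply] at *; exact hc.2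

lemma cross_vanish_on_chord {a c y : ℂ} (hy : y ∈ segment ℝ a c) :
    cross (c - a) (y - a) = 0 := by
  obtain ⟨t, _, _, rfl⟩ := mem_seg.mp hy
  simp only [cross, Complex.sub_re, Complex.sub_im, combo_re, combo_im]
  ring

lemma cross_shift (n y a p : ℂ) (h : cross n (p - a) = 0) :
    cross n (y - p) = cross n (y - a) := by
  simp only [cross, Complex.sub_re, Complex.sub_im] at *
  linarith

lemma cross_parallel_trans {u v x : ℂ} (hu : u ≠ 0) (h1 : cross v u = 0)
    (h2 : cross u x = 0) : cross v x = 0 := by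
  have key1 : u.re * cross v x = x.re * cross v u + v.re * cross u x := by
    simp only [cross]; ring
  have key2 : u.im * cross v x = x.im * cross v u + v.im * cross u x := by
    simp only [cross]; ring
  rw [h1, h2] at key1 key2
  simp only [mul_zero, add_zero] at key1 key2
  rcases (by rwa [Ne, Complex.ext_iff, not_and_or] at hu :
      u.re ≠ (0:ℂ).re ∨ u.im ≠ (0:ℂ).im) with h | h
  · simp only [Complex.zero_re] at h
    exact (mul_eq_zero.mp key1).resolve_left h
  · simp only [Complex.zero_im] at h
    exact (mul_eq_zero.mp key2).resolve_left h

lemma dot_eps (ε : ℝ) (u y : ℂ) : dot (ε • (Complex.I * u)) y = ε * cross u y := by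
  simp only [dot, cross, Complex.real_smul, Complex.mul_re, Complex.mul_im,
    Complex.ofReal_re, Complex.ofReal_im, Complex.I_re, Complex.I_im]
  ring

lemma cross_eps (ε1 ε2 : ℝ) (u v : ℂ) :
    cross (ε1 • (Complex.I * u)) (ε2 • (Complex.I * v)) = ε1 * ε2 * cross u v := by
  simp only [cross, Complex.real_smul, Complex.mul_re, Complex.mul_im,
    Complex.ofReal_re, Complex.ofReal_im, Complex.I_re, Complex.I_im]
  ring

lemma combo_pos {t x y : ℝ} (h0 : 0 ≤ t) (h1 : t ≤ 1) (hx : 0 < x) (hy : 0 < y) :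
    0 < (1 - t) * x + t * y := by
  rcases eq_or_lt_of_le h0 with h | h
  · rw [← h]; simpa using hx
  · have := mul_pos h hy
    nlinarith [mul_nonneg (sub_nonneg.mpr h1) hx.le]

lemma combo_sign {t x y e v : ℝ} (h0 : 0 ≤ t) (h1 : t ≤ 1) (hxy : 0 < x * y)
    (hv : v = (1 - t) * x + t * y) (hev : 0 < e * v) : 0 < e * x := by
  rcases lt_trichotomy x 0 with hx | hx | hx
  · have hy : y < 0 := by nlinarith
    have hvneg : v < 0 := by
      rw [hv]
      nlinarith [combo_pos h0 h1 (neg_pos.mpr hx) (neg_pos.mpr hy)]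
    have he : e < 0 := by nlinarith
    exact mul_pos_of_neg_of_neg he hx
  · exfalso; rw [hx] at hxy; simp at hxy
  · have hy : 0 < y := by nlinarith
    have hvpos : 0 < v := by rw [hv]; exact combo_pos h0 h1 hx hy
    have he : 0 < e := by nlinarith
    exact mul_pos he hx

lemma opp_sign {e1 e2 X : ℝ} (h : e1 * e2 = -1) (h1 : 0 < e1 * X) (h2 : 0 < e2 * X) :
    False := by
  have h3 := mul_pos h1 h2
  have h4 : e1 * X * (e2 * X) = e1 * e2 * (X * X) := by ring
  rw [h4, h] at h3
  nlinarith [mul_self_nonneg X]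

lemma P_of_cross (C D : Chord) (hAdj : CircleGraph.Adj C D) (hni : ¬ Incident C D) :
    P C D := by
  obtain ⟨a, c, hC, ha, hc, hac⟩ := chord_rep C
  obtain ⟨b, d, hD, hb, hd, hbd⟩ := chord_rep D
  obtain ⟨hne, p, hpC, hpD⟩ := hAdj
  rw [hC, chordSegment_mk] at hpC
  rw [hD, chordSegment_mk] at hpD
  have hmem : ∀ z, z ∈ C.1 → z ∈ D.1 → False := fun z h1 h2 => hni ⟨z, h1, h2⟩
  have hnotCD : ∀ z : ℂ, (z = a ∨ z = c) → (z = b ∨ z = d) → False := by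
    intro z h1 h2
    exact hmem z (by rw [hC, Sym2.mem_iff]; exact h1) (by rw [hD, Sym2.mem_iff]; exact h2)
  -- the crossing point is interior
  have hple : ‖p‖ ≤ 1 := norm_le_of_mem_seg ha hc hpC
  have hplt : ‖p‖ < 1 := by
    rcases lt_or_eq_of_le hple with h | h
    · exact h
    · exact absurd (endpoint_of_norm_eq_one ha hc h hpC)
        (fun hend => hnotCD p hend (endpoint_of_norm_eq_one hb hd h hpD))
  have hfp : cross (c - a) (p - a) = 0 := cross_vanish_on_chord hpC
  have hgp : cross (d - b) (p - b) = 0 := cross_vanish_on_chord hpD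
  -- the two chords are not parallel
  have hcross_ne : cross (c - a) (d - b) ≠ 0 := by
    intro h0
    have hdb : d - b ≠ 0 := sub_ne_zero.mpr (Ne.symm hbd)
    have h1 : cross (c - a) (b - p) = 0 := by
      have h2 : cross (d - b) (b - p) = 0 := by
        have : cross (d - b) (b - p) = - cross (d - b) (p - b) := by
          simp only [cross, Complex.sub_re, Complex.sub_im]; ring
        rw [this, hgp]; ring
      exact cross_parallel_trans hdb h0 h2
    have h3 : cross (c - a) (b - a) = 0 := by
      have : cross (c - a) (b - a) = cross (c - a) (b - p) + cross (c - a) (p - a) := by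
        simp only [cross, Complex.sub_re, Complex.sub_im]; ring
      rw [this, h1, hfp]; ring
    have h4 : b ∈ segment ℝ a c := mem_chord_of_cross_eq_zero ha hc hac hb.le h3
    exact hnotCD b (endpoint_of_norm_eq_one ha hc hb h4) (Or.inl rfl)
  -- quadrant data
  set ε : Fin 4 → ℝ × ℝ := ![(1,1),(1,-1),(-1,1),(-1,-1)] with hε
  have hε1 : ∀ i, (ε i).1 = 1 ∨ (ε i).1 = -1 := by
    intro i; fin_cases i <;> simp [hε]
  have hε2 : ∀ i, (ε i).2 = 1 ∨ (ε i).2 = -1 := by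
    intro i; fin_cases i <;> simp [hε]
  have hεne : ∀ i j : Fin 4, i ≠ j →
      (ε i).1 * (ε j).1 = -1 ∨ (ε i).2 * (ε j).2 = -1 := by
    intro i j hij
    fin_cases i <;> fin_cases j <;> simp_all [hε] <;> norm_num
  have hquad : ∀ i : Fin 4, ∃ w1 w2 : ℂ, w1 ≠ w2 ∧ ‖w1‖ = 1 ∧ ‖w2‖ = 1 ∧
      (0 < (ε i).1 * cross (c - a) (w1 - p) ∧ 0 < (ε i).2 * cross (d - b) (w1 - p)) ∧
      (0 < (ε i).1 * cross (c - a) (w2 - p) ∧ 0 < (ε i).2 * cross (d - b) (w2 - p)) := by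
    intro i
    have hm : cross ((ε i).1 • (Complex.I * (c - a))) ((ε i).2 • (Complex.I * (d - b))) ≠ 0 := by
      rw [cross_eps]
      have h1 : (ε i).1 ≠ 0 := by rcases hε1 i with h | h <;> rw [h] <;> norm_num
      have h2 : (ε i).2 ≠ 0 := by rcases hε2 i with h | h <;> rw [h] <;> norm_num
      exact mul_ne_zero (mul_ne_zero h1 h2) hcross_ne
    obtain ⟨w1, w2, hw12, hw1, hw2, q1, q2, q3, q4⟩ := quadrant_points hplt hm
    rw [dot_eps] at q1 q2 q3 q4
    exact ⟨w1, w2, hw12, hw1, hw2, ⟨q1, q2⟩, ⟨q3, q4⟩⟩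
  choose w1 w2 hw12 hw1n hw2n hq1 hq2 using hquad
  set E : Fin 4 → Chord := fun i => mkChord (w1 i) (w2 i) (hw1n i) (hw2n i) (hw12 i) with hE
  have hEseg : ∀ i, chordSegment (E i).1 = segment ℝ (w1 i) (w2 i) := fun i => rfl
  -- sign of the side functions along each E i
  have hside : ∀ i, ∀ y ∈ segment ℝ (w1 i) (w2 i),
      0 < (ε i).1 * cross (c - a) (y - p) ∧ 0 < (ε i).2 * cross (d - b) (y - p) := by
    intro i y hy
    obtain ⟨t, h0, h1, rfl⟩ := mem_seg.mp hy
    rw [cross_combo, cross_combo]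
    constructor
    · have : (ε i).1 * ((1-t) * cross (c-a) (w1 i - p) + t * cross (c-a) (w2 i - p))
          = (1-t) * ((ε i).1 * cross (c-a) (w1 i - p)) + t * ((ε i).1 * cross (c-a) (w2 i - p)) := by ring
      rw [this]
      exact combo_pos h0 h1 (hq1 i).1 (hq2 i).1
    · have : (ε i).2 * ((1-t) * cross (d-b) (w1 i - p) + t * cross (d-b) (w2 i - p))
          = (1-t) * ((ε i).2 * cross (d-b) (w1 i - p)) + t * ((ε i).2 * cross (d-b) (w2 i - p)) := by ring
      rw [this]
      exact combo_pos h0 h1 (hq1 i).2 (hq2 i).2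
  -- segments of E i and E j are disjoint for i ≠ j
  have hdisjE : ∀ i j : Fin 4, i ≠ j → ∀ y, y ∈ segment ℝ (w1 i) (w2 i) →
      y ∈ segment ℝ (w1 j) (w2 j) → False := by
    intro i j hij y hyi hyj
    rcases hεne i j hij with h | h
    · exact opp_sign h (hside i y hyi).1 (hside j y hyj).1
    · exact opp_sign h (hside i y hyi).2 (hside j y hyj).2
  -- E i avoids C and D
  have hCf : ∀ y ∈ segment ℝ a c, cross (c - a) (y - p) = 0 := by
    intro y hy
    rw [cross_shift _ _ _ _ hfp]
    exact cross_vanish_on_chord hy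
  have hDg : ∀ y ∈ segment ℝ b d, cross (d - b) (y - p) = 0 := by
    intro y hy
    rw [cross_shift _ _ _ _ hgp]
    exact cross_vanish_on_chord hy
  have hdisjC : ∀ i, ∀ y, y ∈ segment ℝ (w1 i) (w2 i) → y ∈ segment ℝ a c → False := by
    intro i y hyi hyC
    have h1 := (hside i y hyi).1
    rw [hCf y hyC] at h1
    simp at h1
  have hdisjD : ∀ i, ∀ y, y ∈ segment ℝ (w1 i) (w2 i) → y ∈ segment ℝ b d → False := by
    intro i y hyi hyD
    have h1 := (hside i y hyi).2
    rw [hDg y hyD] at h1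
    simp at h1
  refine ⟨E, ?_, ?_, ?_⟩
  · intro i j hij
    constructor
    · intro hEij
      have : chordSegment (E i).1 = chordSegment (E j).1 := by rw [hEij]
      rw [hEseg, hEseg] at this
      exact hdisjE i j hij (w1 i) (left_mem_segment ℝ _ _)
        (this ▸ left_mem_segment ℝ (w1 i) (w2 i))
    · rintro ⟨-, y, hy1, hy2⟩
      rw [hEseg] at hy1 hy2
      exact hdisjE i j hij y hy1 hy2
  · intro i
    refine ⟨?_, ?_, ?_, ?_⟩
    · rintro ⟨-, y, hy1, hy2⟩
      rw [hEseg] at hy1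
      rw [hC, chordSegment_mk] at hy2
      exact hdisjC i y hy1 hy2
    · rintro ⟨-, y, hy1, hy2⟩
      rw [hEseg] at hy1
      rw [hD, chordSegment_mk] at hy2
      exact hdisjD i y hy1 hy2
    · intro hEC
      have : chordSegment (E i).1 = chordSegment C.1 := by rw [hEC]
      rw [hEseg, hC, chordSegment_mk] at this
      exact hdisjC i (w1 i) (left_mem_segment ℝ _ _) (this ▸ left_mem_segment ℝ (w1 i) (w2 i))
    · intro hED
      have : chordSegment (E i).1 = chordSegment D.1 := by rw [hED]
      rw [hEseg, hD, chordSegment_mk] at this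
      exact hdisjD i (w1 i) (left_mem_segment ℝ _ _) (this ▸ left_mem_segment ℝ (w1 i) (w2 i))
  · rintro F ⟨hFC, hFD, hFneC, hFneD⟩ i j hij ⟨hFEi, hFEj⟩
    obtain ⟨r, s, hFrep, hr, hs, hrs⟩ := chord_rep F
    have hdisjFC : ∀ y, y ∈ segment ℝ r s → y ∈ segment ℝ a c → False := by
      intro y h1 h2
      exact hFC ⟨hFneC, ⟨y, by rw [hFrep, chordSegment_mk]; exact h1,
        by rw [hC, chordSegment_mk]; exact h2⟩⟩
    have hdisjFD : ∀ y, y ∈ segment ℝ r s → y ∈ segment ℝ b d → False := by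
      intro y h1 h2
      exact hFD ⟨hFneD, ⟨y, by rw [hFrep, chordSegment_mk]; exact h1,
        by rw [hD, chordSegment_mk]; exact h2⟩⟩
    have hFf : 0 < cross (c - a) (r - p) * cross (c - a) (s - p) := by
      rw [cross_shift _ _ _ _ hfp, cross_shift _ _ _ _ hfp]
      exact strict_side_of_disjoint ha hc hac hr hs hdisjFC
    have hFg : 0 < cross (d - b) (r - p) * cross (d - b) (s - p) := by
      rw [cross_shift _ _ _ _ hgp, cross_shift _ _ _ _ hgp]
      exact strict_side_of_disjoint hb hd hbd hr hs hdisjFD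
    -- from adjacency to E i and E j extract sign agreement
    have key : ∀ k : Fin 4, CircleGraph.Adj F (E k) →
        0 < (ε k).1 * cross (c - a) (r - p) ∧ 0 < (ε k).2 * cross (d - b) (r - p) := by
      rintro k ⟨-, y, hy1, hy2⟩
      rw [hFrep, chordSegment_mk] at hy1
      rw [hEseg] at hy2
      obtain ⟨hky1, hky2⟩ := hside k y hy2
      obtain ⟨t, h0, h1, hyt⟩ := mem_seg.mp hy1
      have hvf : cross (c - a) (y - p)
          = (1 - t) * cross (c - a) (r - p) + t * cross (c - a) (s - p) := by
        rw [hyt, cross_combo]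
      have hvg : cross (d - b) (y - p)
          = (1 - t) * cross (d - b) (r - p) + t * cross (d - b) (s - p) := by
        rw [hyt, cross_combo]
      exact ⟨combo_sign h0 h1 hFf hvf hky1, combo_sign h0 h1 hFg hvg hky2⟩
    obtain ⟨ki1, ki2⟩ := key i hFEi
    obtain ⟨kj1, kj2⟩ := key j hFEj
    rcases hεne i j hij with h | h
    · exact opp_sign h ki1 kj1
    · exact opp_sign h ki2 kj2

lemma combo_ne_zero {t x y : ℝ} (h0 : 0 ≤ t) (h1 : t ≤ 1) (hxy : 0 < x * y) :
    (1 - t) * x + t * y ≠ 0 := by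
  rcases lt_trichotomy x 0 with hx | hx | hx
  · have hy : y < 0 := by nlinarith
    have := combo_pos h0 h1 (neg_pos.mpr hx) (neg_pos.mpr hy)
    intro h; nlinarith
  · exfalso; rw [hx] at hxy; simp at hxy
  · have hy : 0 < y := by nlinarith
    exact ne_of_gt (combo_pos h0 h1 hx hy)

lemma sign_of_if_eq {x y : ℝ} (hx : x ≠ 0) (hy : y ≠ 0)
    (h : (if 0 < x then true else false) = (if 0 < y then true else false)) :
    0 < x * y := by
  by_cases h1 : 0 < x
  · by_cases h2 : 0 < y
    · exact mul_pos h1 h2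
    · simp [h1, h2] at h
  · by_cases h2 : 0 < y
    · simp [h1, h2] at h
    · exact mul_pos_of_neg_of_neg (lt_of_le_of_ne (not_lt.mp h1) hx)
        (lt_of_le_of_ne (not_lt.mp h2) hy)

lemma neg_of_if_eq {x y : ℝ} (hx : x ≠ 0) (hy : y ≠ 0)
    (h : (if 0 < x then true else false) = (if 0 < y then false else true)) :
    x * y < 0 := by
  by_cases h1 : 0 < x
  · by_cases h2 : 0 < y
    · simp [h1, h2] at h
    · exact mul_neg_of_pos_of_neg h1 (lt_of_le_of_ne (not_lt.mp h2) hy)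
  · by_cases h2 : 0 < y
    · exact mul_neg_of_neg_of_pos (lt_of_le_of_ne (not_lt.mp h1) hx) h2
    · simp [h1, h2] at h

lemma notP_of_incident (C D : Chord) (hAdj : CircleGraph.Adj C D) (hinc : Incident C D) :
    ¬ P C D := by
  obtain ⟨z, hzC, hzD⟩ := hinc
  obtain ⟨a, hCrep⟩ := Sym2.mem_iff_exists.mp hzC
  obtain ⟨b, hDrep⟩ := Sym2.mem_iff_exists.mp hzD
  have hz : ‖z‖ = 1 := C.2.1 z hzC
  have ha : ‖a‖ = 1 := C.2.1 a (by rw [hCrep]; exact Sym2.mem_mk_right z a)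
  have hb : ‖b‖ = 1 := D.2.1 b (by rw [hDrep]; exact Sym2.mem_mk_right z b)
  have hza : z ≠ a := fun h => C.2.2 (by rw [hCrep, Sym2.mk_isDiag_iff]; exact h)
  have hzb : z ≠ b := fun h => D.2.2 (by rw [hDrep, Sym2.mk_isDiag_iff]; exact h)
  have hab : a ≠ b := by
    intro h
    exact hAdj.1 (Subtype.ext (hCrep.trans (by rw [h, ← hDrep])))
  have hfb : cross (a - z) (b - z) ≠ 0 := by
    intro h0
    rcases endpoint_of_norm_eq_one hz ha hb
      (mem_chord_of_cross_eq_zero hz ha hza hb.le h0) with h | h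
    · exact hzb h.symm
    · exact hab h.symm
  have hga : cross (b - z) (a - z) ≠ 0 := by
    intro h0
    rcases endpoint_of_norm_eq_one hz hb ha
      (mem_chord_of_cross_eq_zero hz hb hzb ha.le h0) with h | h
    · exact hza h.symm
    · exact hab h
  rintro ⟨E, hE1, hE2, hE3⟩
  have hrep : ∀ i : Fin 4, ∃ u v : ℂ, (E i).1 = s(u, v) ∧ ‖u‖ = 1 ∧ ‖v‖ = 1 ∧ u ≠ v :=
    fun i => chord_rep (E i)
  choose u v hEirep hu hv huv using hrep
  have hEiseg : ∀ i, chordSegment (E i).1 = segment ℝ (u i) (v i) := by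
    intro i; rw [hEirep i, chordSegment_mk]
  -- E i is strictly on one side of each of the lines through [z,a] and [z,b]
  have hdisjC : ∀ i, ∀ y, y ∈ segment ℝ (u i) (v i) → y ∈ segment ℝ z a → False := by
    intro i y h1 h2
    exact (hE2 i).1 ⟨(hE2 i).2.2.1, ⟨y, by rw [hEiseg]; exact h1,
      by rw [hCrep, chordSegment_mk]; exact h2⟩⟩
  have hdisjD : ∀ i, ∀ y, y ∈ segment ℝ (u i) (v i) → y ∈ segment ℝ z b → False := by
    intro i y h1 h2
    exact (hE2 i).2.1 ⟨(hE2 i).2.2.2, ⟨y, by rw [hEiseg]; exact h1,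
      by rw [hDrep, chordSegment_mk]; exact h2⟩⟩
  have hsideC : ∀ i, 0 < cross (a - z) (u i - z) * cross (a - z) (v i - z) :=
    fun i => strict_side_of_disjoint hz ha hza (hu i) (hv i) (hdisjC i)
  have hsideD : ∀ i, 0 < cross (b - z) (u i - z) * cross (b - z) (v i - z) :=
    fun i => strict_side_of_disjoint hz hb hzb (hu i) (hv i) (hdisjD i)
  have hFune : ∀ i, cross (a - z) (u i - z) ≠ 0 := by
    intro i h0
    have := hsideC i; rw [h0] at this; simp at this
  have hGune : ∀ i, cross (b - z) (u i - z) ≠ 0 := by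
    intro i h0
    have := hsideD i; rw [h0] at this; simp at this
  -- sign pattern of each E i, as an element of Bool × Bool
  set σ : Fin 4 → Bool × Bool := fun i =>
    (if 0 < cross (a - z) (u i - z) then true else false,
     if 0 < cross (b - z) (u i - z) then true else false) with hσdef
  set bad : Bool × Bool :=
    (if 0 < cross (a - z) (b - z) then false else true,
     if 0 < cross (b - z) (a - z) then false else true) with hbaddef
  have hσ : ∀ i, σ i ≠ bad := by
    intro i h
    have h1 : cross (a - z) (u i - z) * cross (a - z) (b - z) < 0 :=
      neg_of_if_eq (hFune i) hfb (congrArg Prod.fst h)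
    have h2 : cross (b - z) (u i - z) * cross (b - z) (a - z) < 0 :=
      neg_of_if_eq (hGune i) hga (congrArg Prod.snd h)
    exact no_fourth_region hz ha hb (hu i) ⟨h1, h2⟩
  -- pigeonhole: two indices with the same sign pattern
  have hcard : Fintype.card {x : Bool × Bool // x ≠ bad} < Fintype.card (Fin 4) := by
    have : Fintype.card {x : Bool × Bool // x ≠ bad} = 3 := by
      simp [Fintype.card_subtype_compl]
    rw [this]; simp
  obtain ⟨i, j, hij, hsame⟩ :=
    Fintype.exists_ne_map_eq_of_card_lt (fun i : Fin 4 => (⟨σ i, hσ i⟩ :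
      {x : Bool × Bool // x ≠ bad})) hcard
  have hsame' : σ i = σ j := congrArg Subtype.val hsame
  have hFij : 0 < cross (a - z) (u i - z) * cross (a - z) (u j - z) :=
    sign_of_if_eq (hFune i) (hFune j) (congrArg Prod.fst hsame')
  have hGij : 0 < cross (b - z) (u i - z) * cross (b - z) (u j - z) :=
    sign_of_if_eq (hGune i) (hGune j) (congrArg Prod.snd hsame')
  -- the segments of E i and E j are disjoint
  have hEdisj : ∀ y, y ∈ segment ℝ (u i) (v i) → y ∈ segment ℝ (u j) (v j) → False := by
    intro y h1 h2
    exact (hE1 i j hij).2 ⟨(hE1 i j hij).1, ⟨y, by rw [hEiseg]; exact h1,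
      by rw [hEiseg]; exact h2⟩⟩
  have huij : u i ≠ u j := by
    intro h
    exact hEdisj (u i) (left_mem_segment ℝ _ _) (h ▸ left_mem_segment ℝ (u j) (v j))
  -- the connecting chord F
  set F : Chord := mkChord (u i) (u j) (hu i) (hu j) huij with hFdef
  have hFseg : chordSegment F.1 = segment ℝ (u i) (u j) := rfl
  -- every point of F has nonzero side values
  have hFside : ∀ y ∈ segment ℝ (u i) (u j),
      cross (a - z) (y - z) ≠ 0 ∧ cross (b - z) (y - z) ≠ 0 := by
    intro y hy
    obtain ⟨t, h0, h1, rfl⟩ := mem_seg.mp hy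
    rw [cross_combo, cross_combo]
    exact ⟨combo_ne_zero h0 h1 hFij, combo_ne_zero h0 h1 hGij⟩
  have hNNF : NN C D F := by
    refine ⟨?_, ?_, ?_, ?_⟩
    · rintro ⟨-, y, hy1, hy2⟩
      rw [hFseg] at hy1
      rw [hCrep, chordSegment_mk] at hy2
      exact (hFside y hy1).1 (cross_vanish_on_chord hy2)
    · rintro ⟨-, y, hy1, hy2⟩
      rw [hFseg] at hy1
      rw [hDrep, chordSegment_mk] at hy2
      exact (hFside y hy1).2 (cross_vanish_on_chord hy2)
    · intro h
      have hseg : chordSegment F.1 = chordSegment C.1 := by rw [h]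
      rw [hFseg, hCrep, chordSegment_mk] at hseg
      have hzmem : z ∈ segment ℝ (u i) (u j) := hseg ▸ left_mem_segment ℝ z a
      have := (hFside z hzmem).1
      apply this
      simp [cross, sub_self]
    · intro h
      have hseg : chordSegment F.1 = chordSegment D.1 := by rw [h]
      rw [hFseg, hDrep, chordSegment_mk] at hseg
      have hzmem : z ∈ segment ℝ (u i) (u j) := hseg ▸ left_mem_segment ℝ z b
      have := (hFside z hzmem).2
      apply this
      simp [cross, sub_self]
  have hFEi : CircleGraph.Adj F (E i) := by
    refine ⟨?_, ⟨u i, by rw [hFseg]; exact left_mem_segment ℝ _ _,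
      by rw [hEiseg]; exact left_mem_segment ℝ _ _⟩⟩
    intro h
    have hseg : chordSegment F.1 = chordSegment (E i).1 := by rw [h]
    rw [hFseg, hEiseg] at hseg
    exact hEdisj (u j) (hseg ▸ right_mem_segment ℝ (u i) (u j))
      (left_mem_segment ℝ _ _)
  have hFEj : CircleGraph.Adj F (E j) := by
    refine ⟨?_, ⟨u j, by rw [hFseg]; exact right_mem_segment ℝ _ _,
      by rw [hEiseg]; exact left_mem_segment ℝ _ _⟩⟩
    intro h
    have hseg : chordSegment F.1 = chordSegment (E j).1 := by rw [h]
    rw [hFseg, hEiseg] at hseg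
    exact hEdisj (u i) (left_mem_segment ℝ _ _)
      (hseg ▸ left_mem_segment ℝ (u i) (u j))
  exact hE3 F hNNF i j hij ⟨hFEi, hFEj⟩

lemma incident_symm {C D : Chord} (h : Incident C D) : Incident D C := by
  obtain ⟨z, h1, h2⟩ := h; exact ⟨z, h2, h1⟩

/-- Core transfer: an automorphism cannot map an incident edge onto a non-incident one. -/

lemma no_transfer (h : CircleGraph ≃g CircleGraph) (C D C' D' : Chord)
    (hadj : CircleGraph.Adj C D) (hadj' : CircleGraph.Adj C' D')
    (hinc : Incident C D) (hninc : ¬ Incident C' D') :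
    ¬ ((h C = C' ∧ h D = D') ∨ (h C = D' ∧ h D = C')) := by
  rintro (⟨h1, h2⟩ | ⟨h1, h2⟩)
  · have hp : P C' D' := P_of_cross C' D' hadj' hninc
    have hPCD : P C D := by
      have := P_map h.symm C' D' hp
      rw [← h1, ← h2] at this
      simpa only [RelIso.symm_apply_apply] using this
    exact notP_of_incident C D hadj hinc hPCD
  · have hp : P D' C' := P_of_cross D' C' (hadj'.symm)
      (fun hI => hninc (incident_symm hI))
    have hPCD : P C D := by
      have := P_map h.symm D' C' hp
      rw [← h1, ← h2] at this
      simpa only [RelIso.symm_apply_apply] using this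
    exact notP_of_incident C D hadj hinc hPCD

lemma norm_negI : ‖(-Complex.I : ℂ)‖ = 1 := by
  rw [norm_neg, Complex.norm_I]

lemma norm_negOne : ‖(-1 : ℂ)‖ = 1 := by
  rw [norm_neg, norm_one]

lemma one_ne_I : (1 : ℂ) ≠ Complex.I := by
  intro h
  have := congrArg Complex.re h
  simp at this

lemma one_ne_negI : (1 : ℂ) ≠ -Complex.I := by
  intro h
  have := congrArg Complex.re h
  simp at this

lemma one_ne_negOne : (1 : ℂ) ≠ -1 := by norm_num

lemma negOne_ne_I : (-1 : ℂ) ≠ Complex.I := by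
  intro h
  have := congrArg Complex.re h
  simp at this

lemma negOne_ne_negI : (-1 : ℂ) ≠ -Complex.I := by
  intro h
  have := congrArg Complex.re h
  simp at this

lemma I_ne_negI : Complex.I ≠ -Complex.I := by
  intro h
  have := congrArg Complex.im h
  simp at this
  norm_num at this

def C0 : Chord := mkChord 1 Complex.I norm_one Complex.norm_I one_ne_I

def D0 : Chord := mkChord 1 (-Complex.I) norm_one norm_negI one_ne_negI

def C0' : Chord := mkChord 1 (-1) norm_one norm_negOne one_ne_negOne

def D0' : Chord := mkChord Complex.I (-Complex.I) Complex.norm_I norm_negI I_ne_negI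

lemma adj_C0D0 : CircleGraph.Adj C0 D0 := by
  constructor
  · intro h
    have h1 : (s(1, Complex.I) : Sym2 ℂ) = s(1, -Complex.I) := congrArg Subtype.val h
    rw [Sym2.eq_iff] at h1
    rcases h1 with ⟨-, h2⟩ | ⟨h2, -⟩
    · exact I_ne_negI h2
    · exact one_ne_negI h2
  · exact ⟨1, left_mem_segment ℝ _ _, left_mem_segment ℝ _ _⟩

lemma zero_mem_seg_one_negOne : (0 : ℂ) ∈ segment ℝ 1 (-1) := by
  refine ⟨1/2, 1/2, by norm_num, by norm_num, by norm_num, ?_⟩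
  simp [Complex.real_smul]

lemma zero_mem_seg_I_negI : (0 : ℂ) ∈ segment ℝ Complex.I (-Complex.I) := by
  refine ⟨1/2, 1/2, by norm_num, by norm_num, by norm_num, ?_⟩
  simp [Complex.real_smul]

lemma adj_C0'D0' : CircleGraph.Adj C0' D0' := by
  constructor
  · intro h
    have h1 : (s(1, -1) : Sym2 ℂ) = s(Complex.I, -Complex.I) := congrArg Subtype.val h
    rw [Sym2.eq_iff] at h1
    rcases h1 with ⟨h2, -⟩ | ⟨h2, -⟩
    · exact one_ne_I h2
    · exact one_ne_negI h2
  · exact ⟨0, zero_mem_seg_one_negOne, zero_mem_seg_I_negI⟩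

lemma inc_C0D0 : Incident C0 D0 :=
  ⟨1, Sym2.mem_mk_left 1 Complex.I, Sym2.mem_mk_left 1 (-Complex.I)⟩

lemma ninc_C0'D0' : ¬ Incident C0' D0' := by
  rintro ⟨w, h1, h2⟩
  rcases Sym2.mem_iff.mp h1 with rfl | rfl
  · rcases Sym2.mem_iff.mp h2 with h | h
    · exact one_ne_I h
    · exact one_ne_negI h
  · rcases Sym2.mem_iff.mp h2 with h | h
    · exact negOne_ne_I h
    · exact negOne_ne_negI h

end CG

/-- The circle graph is not edge-transitive: no automorphism maps an
edge formed by two incident chords to an edge formed by two intersecting non-incident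
chords, and consequently there exist edges not related by any automorphism. -/
theorem circleGraph_not_edgeTransitive :
    (∀ (h : CircleGraph ≃g CircleGraph) (C D C' D' : Chord),
      CircleGraph.Adj C D → CircleGraph.Adj C' D' →
      Incident C D → ¬ Incident C' D' →
      ¬ ((h C = C' ∧ h D = D') ∨ (h C = D' ∧ h D = C'))) ∧
    ∃ C D C' D' : Chord, CircleGraph.Adj C D ∧ CircleGraph.Adj C' D' ∧
      ∀ h : CircleGraph ≃g CircleGraph,
        ¬ ((h C = C' ∧ h D = D') ∨ (h C = D' ∧ h D = C')) := by
  constructor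
  · intro h C D C' D' hadj hadj' hinc hninc
    exact CG.no_transfer h C D C' D' hadj hadj' hinc hninc
  · exact ⟨CG.C0, CG.D0, CG.C0', CG.D0', CG.adj_C0D0, CG.adj_C0'D0',
      fun h => CG.no_transfer h CG.C0 CG.D0 CG.C0' CG.D0' CG.adj_C0D0 CG.adj_C0'D0'
        CG.inc_C0D0 CG.ninc_C0'D0'⟩
end
end

section
/- Let G be a countable graph such that every finite induced subgraph of G is a circle graph. Then G is a circle graph. -/
noncomputable section

/-- A graph is a circle graph if it is isomorphic to the intersection graph of some
family of chords of the circle, i.e. to an induced subgraph of the circle graph. -/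
def IsCircleGraph {V : Type*} (G : SimpleGraph V) : Prop :=
  ∃ F : Set Chord, Nonempty (G ≃g (CircleGraph.induce F))

open Real Set


def P (θ : ℝ) : ℂ := Complex.ofReal (Real.cos θ) + Complex.ofReal (Real.sin θ) * Complex.I

def d2 (u v : ℂ) : ℝ := u.re * v.im - u.im * v.re

@[simp] lemma P_re (θ : ℝ) : (P θ).re = Real.cos θ := by simp [P, Complex.cos_ofReal_re, Complex.sin_ofReal_re]
@[simp] lemma P_im (θ : ℝ) : (P θ).im = Real.sin θ := by simp [P, Complex.cos_ofReal_re, Complex.sin_ofReal_re]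

lemma P_arg {θ : ℝ} (hθ : θ ∈ Ioc (-π) π) : Complex.arg (P θ) = θ := by
  have := Complex.arg_cos_add_sin_mul_I hθ
  simpa [P, Complex.ofReal_cos, Complex.ofReal_sin] using this

lemma P_inj {θ₁ θ₂ : ℝ} (h1 : θ₁ ∈ Ioc (-π) π) (h2 : θ₂ ∈ Ioc (-π) π)
    (h : P θ₁ = P θ₂) : θ₁ = θ₂ := by
  rw [← P_arg h1, ← P_arg h2, h]

lemma P_norm (θ : ℝ) : ‖P θ‖ = 1 := by
  have := Complex.norm_cos_add_sin_mul_I θ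
  simpa [P, Complex.ofReal_cos, Complex.ofReal_sin] using this

lemma P_arg_self {z : ℂ} (hz : ‖z‖ = 1) : P (Complex.arg z) = z := by
  have := Complex.norm_mul_cos_add_sin_mul_I z
  rw [hz] at this
  simpa [P, Complex.ofReal_cos, Complex.ofReal_sin] using this

lemma d2_formula (a b c : ℝ) :
    d2 (P b - P a) (P c - P a)
      = 4 * Real.sin ((b - a)/2) * Real.sin ((c - a)/2) * Real.sin ((c - b)/2) := by
  have h1 : Real.cos b - Real.cos a = -2 * Real.sin ((b+a)/2) * Real.sin ((b-a)/2) := by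
    simpa using Real.cos_sub_cos b a
  have h2 : Real.sin c - Real.sin a = 2 * Real.sin ((c-a)/2) * Real.cos ((c+a)/2) := by
    simpa using Real.sin_sub_sin c a
  have h3 : Real.sin b - Real.sin a = 2 * Real.sin ((b-a)/2) * Real.cos ((b+a)/2) := by
    simpa using Real.sin_sub_sin b a
  have h4 : Real.cos c - Real.cos a = -2 * Real.sin ((c+a)/2) * Real.sin ((c-a)/2) := by
    simpa using Real.cos_sub_cos c a
  have h5 : (c - b)/2 = (c+a)/2 - (b+a)/2 := by ring
  have h6 : Real.sin ((c-b)/2)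
      = Real.sin ((c+a)/2) * Real.cos ((b+a)/2) - Real.cos ((c+a)/2) * Real.sin ((b+a)/2) := by
    rw [h5, Real.sin_sub]
  simp only [d2, Complex.sub_re, Complex.sub_im, P_re, P_im]
  rw [h1, h2, h3, h4, h6]; ring

lemma d2_smul_right (u v : ℂ) (s : ℝ) : d2 u (s • v) = s * d2 u v := by
  simp [d2, Complex.smul_re, Complex.smul_im]; ring

lemma d2_add_right (u v w : ℂ) : d2 u (v + w) = d2 u v + d2 u w := by
  simp [d2]; ring

lemma d2_self (u : ℂ) : d2 u u = 0 := by simp [d2]; ring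

lemma mem_segment_param {x y : ℂ} {t : ℝ} (h0 : 0 ≤ t) (h1 : t ≤ 1) :
    x + t • (y - x) ∈ segment ℝ x y := by
  rw [segment_eq_image']
  exact ⟨t, ⟨h0, h1⟩, rfl⟩


lemma d2_antisym (u v : ℂ) : d2 u v = - d2 v u := by simp [d2]; ring

lemma cramer (u w v : ℂ) : (d2 u w) • v = (d2 v w) • u + (d2 u v) • w := by
  apply Complex.ext <;>
    simp only [d2, Complex.add_re, Complex.add_im, Complex.smul_re, Complex.smul_im, smul_eq_mul] <;> ring

lemma seg_cross {pa pb pc pd : ℂ}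
    (h1 : d2 (pb - pa) (pc - pa) * d2 (pb - pa) (pd - pa) < 0)
    (h2 : d2 (pd - pc) (pa - pc) * d2 (pd - pc) (pb - pc) < 0) :
    (segment ℝ pa pb ∩ segment ℝ pc pd).Nonempty := by
  set u : ℂ := pb - pa with hu
  set w : ℂ := pd - pc with hw
  set v : ℂ := pc - pa with hv
  set A := d2 u v with hA
  set B := d2 u (pd - pa) with hB
  set C := d2 (pd - pc) (pa - pc) with hCdef
  set D := d2 (pd - pc) (pb - pc) with hD
  have hC' : C = d2 v w := by
    simp only [hCdef, hv, hw, d2, Complex.sub_re, Complex.sub_im]; ring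
  have hδ' : B - A = d2 u w := by
    simp only [hB, hA, hu, hv, hw, d2, Complex.sub_re, Complex.sub_im]; ring
  set δ : ℝ := B - A with hδdef
  have hDC : D = C - δ := by
    simp only [hD, hCdef, hδdef, hB, hA, hu, hv, hw, d2, Complex.sub_re, Complex.sub_im]; ring
  have hδ : δ ≠ 0 := by
    intro h
    have hAB : A = B := by have := sub_eq_zero.mp h; linarith
    rw [hAB] at h1; nlinarith [sq_nonneg B]
  have hs0 : 0 ≤ C / δ ∧ C / δ ≤ 1 := by
    rcases lt_or_gt_of_ne hδ with hneg | hpos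
    · have hCle : C ≤ 0 := by nlinarith
      have hCge : δ ≤ C := by nlinarith
      constructor
      · exact div_nonneg_iff.mpr (Or.inr ⟨hCle, hneg.le⟩)
      · rw [div_le_one_iff]; exact Or.inr (Or.inr ⟨hneg, hCge⟩)
    · have hCge : 0 ≤ C := by nlinarith
      have hCle : C ≤ δ := by nlinarith
      exact ⟨div_nonneg hCge hpos.le, (div_le_one hpos).mpr hCle⟩
  have ht0 : 0 ≤ -A / δ ∧ -A / δ ≤ 1 := by
    rcases lt_or_gt_of_ne hδ with hneg | hpos
    · have h1' : -A ≤ 0 := by nlinarith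
      have h2' : δ ≤ -A := by nlinarith
      constructor
      · exact div_nonneg_iff.mpr (Or.inr ⟨h1', hneg.le⟩)
      · rw [div_le_one_iff]; exact Or.inr (Or.inr ⟨hneg, h2'⟩)
    · have h1' : 0 ≤ -A := by nlinarith
      have h2' : -A ≤ δ := by nlinarith
      exact ⟨div_nonneg h1' hpos.le, (div_le_one hpos).mpr h2'⟩
  refine ⟨pa + (C / δ) • u, mem_segment_param hs0.1 hs0.2, ?_⟩
  have cram : δ • v = C • u + A • w := by
    rw [hδ', hC', hA]; exact cramer u w v
  have key : pa + (C / δ) • u = pc + (-A / δ) • w := by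
    have hvp : pc = pa + v := by rw [hv]; ring
    have main : (C / δ) • u + (A / δ) • w = v := by
      rw [div_eq_inv_mul, div_eq_inv_mul, ← smul_smul, ← smul_smul, ← smul_add, ← cram,
        smul_smul, inv_mul_cancel₀ hδ, one_smul]
    rw [hvp]
    have : (-A / δ) • w = -((A / δ) • w) := by rw [neg_div, neg_smul]
    rw [this, ← main]; abel
  rw [key]
  exact mem_segment_param ht0.1 ht0.2

lemma seg_disj {pa pb pc pd : ℂ}
    (h1 : 0 < d2 (pb - pa) (pc - pa) * d2 (pb - pa) (pd - pa)) :
    ¬ (segment ℝ pa pb ∩ segment ℝ pc pd).Nonempty := by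
  rintro ⟨x, hx1, hx2⟩
  rw [segment_eq_image'] at hx1 hx2
  obtain ⟨s, hs, rfl⟩ := hx1
  obtain ⟨t, ht, heq⟩ := hx2
  have heq' : pc + t • (pd - pc) = pa + s • (pb - pa) := heq
  have e1 : d2 (pb - pa) (pa + s • (pb - pa) - pa) = 0 := by
    rw [add_sub_cancel_left, d2_smul_right, d2_self, mul_zero]
  have e2 : pa + s • (pb - pa) - pa = (pc - pa) + t • (pd - pc) := by
    rw [← heq']; abel
  rw [e2, d2_add_right, d2_smul_right] at e1
  have e3 : d2 (pb - pa) (pd - pc) = d2 (pb - pa) (pd - pa) - d2 (pb - pa) (pc - pa) := by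
    simp only [d2, Complex.sub_re, Complex.sub_im]; ring
  rw [e3] at e1
  rcases mul_pos_iff.mp h1 with ⟨hA, hB⟩ | ⟨hA, hB⟩
  · nlinarith [mul_nonneg (sub_nonneg.mpr ht.2) hA.le, mul_nonneg ht.1 hB.le]
  · nlinarith [mul_nonneg (sub_nonneg.mpr ht.2) (neg_nonneg.mpr hA.le),
      mul_nonneg ht.1 (neg_nonneg.mpr hB.le)]

lemma sin_half_pos {x y : ℝ} (hx : x ∈ Ioc (-π) π) (hy : y ∈ Ioc (-π) π) (h : y < x) :
    0 < Real.sin ((x - y)/2) := by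
  apply Real.sin_pos_of_pos_of_lt_pi
  · linarith
  · have := hx.2; have := hy.1; linarith [Real.pi_pos]

lemma sin_half_neg {x y : ℝ} (hx : x ∈ Ioc (-π) π) (hy : y ∈ Ioc (-π) π) (h : x < y) :
    Real.sin ((x - y)/2) < 0 := by
  have : (x - y)/2 = -((y - x)/2) := by ring
  rw [this, Real.sin_neg, neg_lt, neg_zero]
  exact sin_half_pos hy hx h

def BtwReal (a b x : ℝ) : Prop := (a < x ∧ x < b) ∨ (b < x ∧ x < a)
def IlvReal (p q c d : ℝ) : Prop :=
  (BtwReal p q c ∧ ¬ BtwReal p q d) ∨ (BtwReal p q d ∧ ¬ BtwReal p q c)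
def PairEqReal (p q c d : ℝ) : Prop := (p = c ∧ q = d) ∨ (p = d ∧ q = c)
def CrossReal (p q c d : ℝ) : Prop :=
  ((p = c ∨ p = d) ∨ (q = c ∨ q = d)) ∨ IlvReal p q c d

lemma btw_iff' {a b x : ℝ} (hab : a < b) : BtwReal a b x ↔ a < x ∧ x < b := by
  unfold BtwReal
  constructor
  · rintro (h | h)
    · exact h
    · exact absurd (h.1.trans h.2) (by linarith)
  · exact Or.inl

lemma btwReal_symm {a b x : ℝ} : BtwReal a b x ↔ BtwReal b a x := by
  unfold BtwReal; tauto

lemma ilvReal_symm₁ {p q c d : ℝ} : IlvReal p q c d ↔ IlvReal q p c d := by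
  unfold IlvReal; rw [@btwReal_symm p q c, @btwReal_symm p q d]

lemma ilvReal_symm₂ {p q c d : ℝ} : IlvReal p q c d ↔ IlvReal p q d c := by
  unfold IlvReal; tauto

lemma side_prod_neg {a b x : ℝ} (ha : a ∈ Ioc (-π) π) (hb : b ∈ Ioc (-π) π)
    (hx : x ∈ Ioc (-π) π) (h1 : a < x) (h2 : x < b) :
    Real.sin ((x - a)/2) * Real.sin ((x - b)/2) < 0 :=
  mul_neg_of_pos_of_neg (sin_half_pos hx ha h1) (sin_half_neg hx hb h2)

lemma side_prod_pos {a b x : ℝ} (ha : a ∈ Ioc (-π) π) (hb : b ∈ Ioc (-π) π)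
    (hx : x ∈ Ioc (-π) π) (hab : a < b) (hxa : x ≠ a) (hxb : x ≠ b)
    (hbtw : ¬ BtwReal a b x) : 0 < Real.sin ((x - a)/2) * Real.sin ((x - b)/2) := by
  rw [btw_iff' hab] at hbtw
  push_neg at hbtw
  rcases lt_trichotomy x a with h | h | h
  · exact mul_pos_of_neg_of_neg (sin_half_neg hx ha h) (sin_half_neg hx hb (h.trans hab))
  · exact absurd h hxa
  · have hxb' : b < x := by
      rcases lt_or_eq_of_le (hbtw h) with h' | h'
      · exact h'
      · exact absurd h'.symm hxb
    exact mul_pos (sin_half_pos hx ha h) (sin_half_pos hx hb hxb')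

lemma disj_canon {a b c d : ℝ} (ha : a ∈ Ioc (-π) π) (hb : b ∈ Ioc (-π) π)
    (hc : c ∈ Ioc (-π) π) (hd : d ∈ Ioc (-π) π) (hab : a < b)
    (hca : c ≠ a) (hcb : c ≠ b) (hda : d ≠ a) (hdb : d ≠ b)
    (hside : BtwReal a b c ↔ BtwReal a b d) :
    ¬ (segment ℝ (P a) (P b) ∩ segment ℝ (P c) (P d)).Nonempty := by
  apply seg_disj
  rw [d2_formula a b c, d2_formula a b d]
  have hs0 : 0 < Real.sin ((b - a)/2) := sin_half_pos hb ha hab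
  have key : 4 * Real.sin ((b - a)/2) * Real.sin ((c - a)/2) * Real.sin ((c - b)/2) *
      (4 * Real.sin ((b - a)/2) * Real.sin ((d - a)/2) * Real.sin ((d - b)/2))
      = (16 * (Real.sin ((b - a)/2) * Real.sin ((b - a)/2))) *
        ((Real.sin ((c - a)/2) * Real.sin ((c - b)/2)) *
         (Real.sin ((d - a)/2) * Real.sin ((d - b)/2))) := by ring
  rw [key]
  apply mul_pos (by positivity)
  by_cases hbc : BtwReal a b c
  · have hbd := hside.mp hbc
    rw [btw_iff' hab] at hbc hbd
    exact mul_pos_of_neg_of_neg (side_prod_neg ha hb hc hbc.1 hbc.2)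
      (side_prod_neg ha hb hd hbd.1 hbd.2)
  · have hbd := (not_iff_not.mpr hside).mp hbc
    exact mul_pos (side_prod_pos ha hb hc hab hca hcb hbc)
      (side_prod_pos ha hb hd hab hda hdb hbd)

lemma cross_canon {w x y z : ℝ} (hw : w ∈ Ioc (-π) π) (hx : x ∈ Ioc (-π) π)
    (hy : y ∈ Ioc (-π) π) (hz : z ∈ Ioc (-π) π) (h1 : w < x) (h2 : x < y) (h3 : y < z) :
    (segment ℝ (P w) (P y) ∩ segment ℝ (P x) (P z)).Nonempty := by
  apply seg_cross
  · rw [d2_formula w y x, d2_formula w y z]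
    have e : 4 * Real.sin ((y - w)/2) * Real.sin ((x - w)/2) * Real.sin ((x - y)/2) *
        (4 * Real.sin ((y - w)/2) * Real.sin ((z - w)/2) * Real.sin ((z - y)/2))
        = (16 * (Real.sin ((y - w)/2) * Real.sin ((y - w)/2)) * Real.sin ((x - w)/2) *
            (Real.sin ((z - w)/2) * Real.sin ((z - y)/2))) * Real.sin ((x - y)/2) := by ring
    rw [e]
    apply mul_neg_of_pos_of_neg
    · have p1 := sin_half_pos hy hw (h1.trans h2)
      have p2 := sin_half_pos hx hw h1
      have p3 := sin_half_pos hz hw (h1.trans (h2.trans h3))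
      have p4 := sin_half_pos hz hy h3
      positivity
    · exact sin_half_neg hx hy h2
  · rw [d2_formula x z w, d2_formula x z y]
    have e : 4 * Real.sin ((z - x)/2) * Real.sin ((w - x)/2) * Real.sin ((w - z)/2) *
        (4 * Real.sin ((z - x)/2) * Real.sin ((y - x)/2) * Real.sin ((y - z)/2))
        = (16 * (Real.sin ((z - x)/2) * Real.sin ((z - x)/2)) *
            (Real.sin ((w - x)/2) * Real.sin ((w - z)/2)) * Real.sin ((y - x)/2)) *
          Real.sin ((y - z)/2) := by ring
    rw [e]
    apply mul_neg_of_pos_of_neg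
    · have p1 := sin_half_pos hz hx (h2.trans h3)
      have p2 := sin_half_neg hw hx h1
      have p3 := sin_half_neg hw hz (h1.trans (h2.trans h3))
      have p4 := sin_half_pos hy hx h2
      have h16 : 0 < 16 * (Real.sin ((z - x)/2) * Real.sin ((z - x)/2)) := by positivity
      exact mul_pos (mul_pos h16 (mul_pos_of_neg_of_neg p2 p3)) p4
    · exact sin_half_neg hy hz h3

lemma seg_iff_sorted {a b c d : ℝ} (ha : a ∈ Ioc (-π) π) (hb : b ∈ Ioc (-π) π)
    (hc : c ∈ Ioc (-π) π) (hd : d ∈ Ioc (-π) π) (hab : a < b) (hcd : c < d)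
    (hca : c ≠ a) (hcb : c ≠ b) (hda : d ≠ a) (hdb : d ≠ b) :
    (segment ℝ (P a) (P b) ∩ segment ℝ (P c) (P d)).Nonempty ↔ IlvReal a b c d := by
  by_cases hic : BtwReal a b c <;> by_cases hid : BtwReal a b d
  · constructor
    · intro hne; exact absurd hne (disj_canon ha hb hc hd hab hca hcb hda hdb (iff_of_true hic hid))
    · intro hi; exact absurd hi (by unfold IlvReal; tauto)
  · constructor
    · intro _; exact Or.inl ⟨hic, hid⟩
    · intro _
      have h1 : a < c ∧ c < b := (btw_iff' hab).mp hic
      have hbd : b < d := by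
        rcases (not_and_or.mp ((btw_iff' hab).not.mp hid)) with h | h
        · push_neg at h; exact absurd (lt_of_lt_of_le hcd (le_of_lt (lt_of_le_of_lt h h1.1)))
            (lt_irrefl _)
        · push_neg at h
          rcases lt_or_eq_of_le h with h' | h'
          · exact h'
          · exact absurd h'.symm hdb
      exact cross_canon ha hc hb hd h1.1 h1.2 hbd
  · constructor
    · intro _; exact Or.inr ⟨hid, hic⟩
    · intro _
      have h1 : a < d ∧ d < b := (btw_iff' hab).mp hid
      have hcla : c < a := by
        rcases (not_and_or.mp ((btw_iff' hab).not.mp hic)) with h | h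
        · push_neg at h
          rcases lt_or_eq_of_le h with h' | h'
          · exact h'
          · exact absurd h' hca
        · push_neg at h; exact absurd (h1.2.trans_le (h.trans hcd.le)) (lt_irrefl _)
      rw [Set.inter_comm]
      exact cross_canon hc ha hd hb hcla h1.1 h1.2
  · constructor
    · intro hne; exact absurd hne (disj_canon ha hb hc hd hab hca hcb hda hdb (iff_of_false hic hid))
    · intro hi; exact absurd hi (by unfold IlvReal; tauto)

theorem seg_inter_iff {a b c d : ℝ} (ha : a ∈ Ioc (-π) π) (hb : b ∈ Ioc (-π) π)
    (hc : c ∈ Ioc (-π) π) (hd : d ∈ Ioc (-π) π) (hab : a ≠ b) (hcd : c ≠ d) :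
    (segment ℝ (P a) (P b) ∩ segment ℝ (P c) (P d)).Nonempty ↔ CrossReal a b c d := by
  by_cases hsh : (a = c ∨ a = d) ∨ (b = c ∨ b = d)
  · constructor
    · intro _; exact Or.inl hsh
    · intro _
      rcases hsh with (h | h) | (h | h)
      · exact ⟨P a, left_mem_segment ℝ _ _, h ▸ left_mem_segment ℝ _ _⟩
      · exact ⟨P a, left_mem_segment ℝ _ _, h ▸ right_mem_segment ℝ _ _⟩
      · exact ⟨P b, right_mem_segment ℝ _ _, h ▸ left_mem_segment ℝ _ _⟩
      · exact ⟨P b, right_mem_segment ℝ _ _, h ▸ right_mem_segment ℝ _ _⟩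
  · push_neg at hsh
    obtain ⟨⟨hac, had⟩, hbc, hbd⟩ := hsh
    have main : (segment ℝ (P a) (P b) ∩ segment ℝ (P c) (P d)).Nonempty ↔ IlvReal a b c d := by
      rcases lt_or_gt_of_ne hab with h1 | h1 <;> rcases lt_or_gt_of_ne hcd with h2 | h2
      · exact seg_iff_sorted ha hb hc hd h1 h2 hac.symm hbc.symm had.symm hbd.symm
      · rw [show segment ℝ (P c) (P d) = segment ℝ (P d) (P c) from segment_symm ℝ _ _,
          ilvReal_symm₂]
        exact seg_iff_sorted ha hb hd hc h1 h2 had.symm hbd.symm hac.symm hbc.symm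
      · rw [show segment ℝ (P a) (P b) = segment ℝ (P b) (P a) from segment_symm ℝ _ _,
          ilvReal_symm₁]
        exact seg_iff_sorted hb ha hc hd h1 h2 hbc.symm hac.symm hbd.symm had.symm
      · rw [show segment ℝ (P a) (P b) = segment ℝ (P b) (P a) from segment_symm ℝ _ _,
          show segment ℝ (P c) (P d) = segment ℝ (P d) (P c) from segment_symm ℝ _ _,
          ilvReal_symm₁, ilvReal_symm₂]
        exact seg_iff_sorted hb ha hd hc h1 h2 hbd.symm had.symm hbc.symm hac.symm
    rw [main]
    unfold CrossReal
    constructor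
    · exact Or.inr
    · rintro (h | h)
      · exact absurd h (by push_neg; exact ⟨⟨hac, had⟩, hbc, hbd⟩)
      · exact h


/-! ### Angles of a chord -/

def aMin (p : Sym2 ℂ) : ℝ :=
  Sym2.lift ⟨fun x y => min (Complex.arg x) (Complex.arg y), fun x y => min_comm _ _⟩ p

def aMax (p : Sym2 ℂ) : ℝ :=
  Sym2.lift ⟨fun x y => max (Complex.arg x) (Complex.arg y), fun x y => max_comm _ _⟩ p

lemma chord_spec (C : Chord) :
    aMin C.1 ∈ Ioc (-π) π ∧ aMax C.1 ∈ Ioc (-π) π ∧ aMin C.1 < aMax C.1 ∧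
      C.1 = s(P (aMin C.1), P (aMax C.1)) := by
  obtain ⟨⟨x, y⟩, hxy⟩ := Quot.exists_rep C.1
  obtain ⟨hS, hdiag⟩ := C.2
  have hx : x ∈ S1 := hS x (by rw [← hxy]; exact Sym2.mem_mk_left x y)
  have hy : y ∈ S1 := hS y (by rw [← hxy]; exact Sym2.mem_mk_right x y)
  have hne : x ≠ y := by
    intro h; apply hdiag; rw [← hxy, h]; exact Sym2.mk_isDiag_iff.mpr rfl
  have hPx : P (Complex.arg x) = x := P_arg_self hx
  have hPy : P (Complex.arg y) = y := P_arg_self hy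
  have hargne : Complex.arg x ≠ Complex.arg y := by
    intro h; apply hne; rw [← hPx, ← hPy, h]
  have hmin : aMin C.1 = min (Complex.arg x) (Complex.arg y) := by
    rw [← hxy]; rfl
  have hmax : aMax C.1 = max (Complex.arg x) (Complex.arg y) := by
    rw [← hxy]; rfl
  have hmem := Complex.arg_mem_Ioc x
  have hmem' := Complex.arg_mem_Ioc y
  refine ⟨?_, ?_, ?_, ?_⟩
  · rw [hmin]
    rcases min_cases (Complex.arg x) (Complex.arg y) with ⟨h, _⟩ | ⟨h, _⟩ <;> rw [h] <;>
      assumption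
  · rw [hmax]
    rcases max_cases (Complex.arg x) (Complex.arg y) with ⟨h, _⟩ | ⟨h, _⟩ <;> rw [h] <;>
      assumption
  · rw [hmin, hmax]
    exact min_lt_max.mpr hargne
  · rw [hmin, hmax, ← hxy]
    rcases le_total (Complex.arg x) (Complex.arg y) with h | h
    · rw [min_eq_left h, max_eq_right h, hPx, hPy]
    · rw [min_eq_right h, max_eq_left h, hPx, hPy, Sym2.eq_swap]

lemma chord_seg (C : Chord) :
    chordSegment C.1 = segment ℝ (P (aMin C.1)) (P (aMax C.1)) := by
  conv_lhs => rw [(chord_spec C).2.2.2]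
  rfl

lemma chord_eq_iff (C D : Chord) :
    C = D ↔ PairEqReal (aMin C.1) (aMax C.1) (aMin D.1) (aMax D.1) := by
  obtain ⟨m1, m2, hlt, heq⟩ := chord_spec C
  obtain ⟨m1', m2', hlt', heq'⟩ := chord_spec D
  constructor
  · intro h; subst h; exact Or.inl ⟨rfl, rfl⟩
  · rintro (⟨h1, h2⟩ | ⟨h1, h2⟩)
    · apply Subtype.ext; rw [heq, heq', h1, h2]
    · exact absurd (h1 ▸ h2 ▸ hlt') (by rw [h1, h2] at hlt ⊢; exact asymm hlt)

/-! ### Combinatorial relations -/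

section Comb

variable {V : Type}

def EqvR (R : V × Bool → V × Bool → Bool) (a b : V × Bool) : Prop :=
  R a b = true ∧ R b a = true

def LtR (R : V × Bool → V × Bool → Bool) (a b : V × Bool) : Prop :=
  R a b = true ∧ ¬ R b a = true

def BtwR (R : V × Bool → V × Bool → Bool) (a b x : V × Bool) : Prop :=
  (LtR R a x ∧ LtR R x b) ∨ (LtR R b x ∧ LtR R x a)

def IlvR (R : V × Bool → V × Bool → Bool) (u v : V) : Prop :=
  (BtwR R (u, false) (u, true) (v, false) ∧ ¬ BtwR R (u, false) (u, true) (v, true)) ∨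
  (BtwR R (u, false) (u, true) (v, true) ∧ ¬ BtwR R (u, false) (u, true) (v, false))

def CrossR (R : V × Bool → V × Bool → Bool) (u v : V) : Prop :=
  ((EqvR R (u, false) (v, false) ∨ EqvR R (u, false) (v, true)) ∨
   (EqvR R (u, true) (v, false) ∨ EqvR R (u, true) (v, true))) ∨ IlvR R u v

def PairEqvR (R : V × Bool → V × Bool → Bool) (u v : V) : Prop :=
  (EqvR R (u, false) (v, false) ∧ EqvR R (u, true) (v, true)) ∨
  (EqvR R (u, false) (v, true) ∧ EqvR R (u, true) (v, false))

lemma eqvR_iff (R : V × Bool → V × Bool → Bool) (f : V × Bool → ℝ)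
    (hR : ∀ a b, R a b = true ↔ f a ≤ f b) (a b : V × Bool) :
    EqvR R a b ↔ f a = f b := by
  rw [EqvR, hR, hR, ← le_antisymm_iff]

lemma ltR_iff (R : V × Bool → V × Bool → Bool) (f : V × Bool → ℝ)
    (hR : ∀ a b, R a b = true ↔ f a ≤ f b) (a b : V × Bool) :
    LtR R a b ↔ f a < f b := by
  rw [LtR, hR, hR, ← lt_iff_le_not_ge]

lemma btwR_iff (R : V × Bool → V × Bool → Bool) (f : V × Bool → ℝ)
    (hR : ∀ a b, R a b = true ↔ f a ≤ f b) (a b x : V × Bool) :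
    BtwR R a b x ↔ BtwReal (f a) (f b) (f x) := by
  rw [BtwR, BtwReal, ltR_iff R f hR, ltR_iff R f hR, ltR_iff R f hR, ltR_iff R f hR]

lemma ilvR_iff (R : V × Bool → V × Bool → Bool) (f : V × Bool → ℝ)
    (hR : ∀ a b, R a b = true ↔ f a ≤ f b) (u v : V) :
    IlvR R u v ↔ IlvReal (f (u, false)) (f (u, true)) (f (v, false)) (f (v, true)) := by
  rw [IlvR, IlvReal, btwR_iff R f hR, btwR_iff R f hR]

lemma crossR_iff (R : V × Bool → V × Bool → Bool) (f : V × Bool → ℝ)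
    (hR : ∀ a b, R a b = true ↔ f a ≤ f b) (u v : V) :
    CrossR R u v ↔ CrossReal (f (u, false)) (f (u, true)) (f (v, false)) (f (v, true)) := by
  rw [CrossR, CrossReal, IlvR, IlvReal, btwR_iff R f hR, btwR_iff R f hR,
    eqvR_iff R f hR, eqvR_iff R f hR, eqvR_iff R f hR, eqvR_iff R f hR]

lemma pairEqvR_iff (R : V × Bool → V × Bool → Bool) (f : V × Bool → ℝ)
    (hR : ∀ a b, R a b = true ↔ f a ≤ f b) (u v : V) :
    PairEqvR R u v ↔ PairEqReal (f (u, false)) (f (u, true)) (f (v, false)) (f (v, true)) := by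
  rw [PairEqvR, PairEqReal, eqvR_iff R f hR, eqvR_iff R f hR, eqvR_iff R f hR, eqvR_iff R f hR]

variable (G : SimpleGraph V)

structure Good (s : Finset V) (R : V × Bool → V × Bool → Bool) : Prop where
  tot : ∀ a b : V × Bool, a.1 ∈ s → b.1 ∈ s → R a b = true ∨ R b a = true
  trans : ∀ a b c : V × Bool, a.1 ∈ s → b.1 ∈ s → c.1 ∈ s →
    R a b = true → R b c = true → R a c = true
  strict : ∀ v ∈ s, ¬ EqvR R (v, false) (v, true)
  adj : ∀ u v : V, u ∈ s → v ∈ s → u ≠ v → (G.Adj u v ↔ CrossR R u v)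
  inj : ∀ u v : V, u ∈ s → v ∈ s → u ≠ v → ¬ PairEqvR R u v

lemma good_mono {G : SimpleGraph V} {s t : Finset V} {R} (hst : s ⊆ t)
    (h : Good G t R) : Good G s R where
  tot a b ha hb := h.tot a b (hst ha) (hst hb)
  trans a b c ha hb hc := h.trans a b c (hst ha) (hst hb) (hst hc)
  strict v hv := h.strict v (hst hv)
  adj u v hu hv := h.adj u v (hst hu) (hst hv)
  inj u v hu hv := h.inj u v (hst hu) (hst hv)

lemma good_congr {G : SimpleGraph V} {s : Finset V} {R R'}
    (hag : ∀ a b : V × Bool, a.1 ∈ s → b.1 ∈ s → R a b = R' a b)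
    (h : Good G s R) : Good G s R' := by
  have heqv : ∀ a b : V × Bool, a.1 ∈ s → b.1 ∈ s → (EqvR R a b ↔ EqvR R' a b) := by
    intro a b ha hb; rw [EqvR, EqvR, hag a b ha hb, hag b a hb ha]
  have hlt : ∀ a b : V × Bool, a.1 ∈ s → b.1 ∈ s → (LtR R a b ↔ LtR R' a b) := by
    intro a b ha hb; rw [LtR, LtR, hag a b ha hb, hag b a hb ha]
  have hbtw : ∀ a b x : V × Bool, a.1 ∈ s → b.1 ∈ s → x.1 ∈ s →
      (BtwR R a b x ↔ BtwR R' a b x) := by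
    intro a b x ha hb hx
    rw [BtwR, BtwR, hlt a x ha hx, hlt x b hx hb, hlt b x hb hx, hlt x a hx ha]
  have hilv : ∀ u v : V, u ∈ s → v ∈ s → (IlvR R u v ↔ IlvR R' u v) := by
    intro u v hu hv
    rw [IlvR, IlvR, hbtw (u,false) (u,true) (v,false) hu hu hv,
      hbtw (u,false) (u,true) (v,true) hu hu hv]
  have hcross : ∀ u v : V, u ∈ s → v ∈ s → (CrossR R u v ↔ CrossR R' u v) := by
    intro u v hu hv
    rw [CrossR, CrossR, hilv u v hu hv, heqv (u,false) (v,false) hu hv,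
      heqv (u,false) (v,true) hu hv, heqv (u,true) (v,false) hu hv,
      heqv (u,true) (v,true) hu hv]
  have hpe : ∀ u v : V, u ∈ s → v ∈ s → (PairEqvR R u v ↔ PairEqvR R' u v) := by
    intro u v hu hv
    rw [PairEqvR, PairEqvR, heqv (u,false) (v,false) hu hv,
      heqv (u,false) (v,true) hu hv, heqv (u,true) (v,false) hu hv,
      heqv (u,true) (v,true) hu hv]
  exact {
    tot := fun a b ha hb => by rw [← hag a b ha hb, ← hag b a hb ha]; exact h.tot a b ha hb
    trans := fun a b c ha hb hc => by
      rw [← hag a b ha hb, ← hag b c hb hc, ← hag a c ha hc]; exact h.trans a b c ha hb hc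
    strict := fun v hv => by rw [← heqv _ _ hv hv]; exact h.strict v hv
    adj := fun u v hu hv hne => by rw [← hcross u v hu hv]; exact h.adj u v hu hv hne
    inj := fun u v hu hv hne => by rw [← hpe u v hu hv]; exact h.inj u v hu hv hne }

end Comb

/-! ### Extraction: finite stages are good -/

lemma exists_good {V : Type} (G : SimpleGraph V)
    (h : ∀ s : Finset V, IsCircleGraph (G.induce (s : Set V))) (s : Finset V) :
    ∃ R, Good G s R := by
  classical
  obtain ⟨F, ⟨φ⟩⟩ := h s
  set c : {x // x ∈ (s : Set V)} → Chord := fun x => (φ x).1 with hc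
  have hcinj : Function.Injective c := by
    intro x y hxy
    have : φ x = φ y := Subtype.ext hxy
    exact φ.toEquiv.injective this
  set f : V × Bool → ℝ := fun a =>
    if ha : a.1 ∈ (s : Set V) then
      (if a.2 then aMax (c ⟨a.1, ha⟩).1 else aMin (c ⟨a.1, ha⟩).1)
    else 0 with hf
  have hf0 : ∀ (v : V) (hv : v ∈ (s : Set V)), f (v, false) = aMin (c ⟨v, hv⟩).1 := by
    intro v hv; simp only [hf, dif_pos hv]; rfl
  have hf1 : ∀ (v : V) (hv : v ∈ (s : Set V)), f (v, true) = aMax (c ⟨v, hv⟩).1 := by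
    intro v hv; simp only [hf, dif_pos hv]; rfl
  refine ⟨fun a b => decide (f a ≤ f b), ?_⟩
  have hR : ∀ a b, (fun a b => decide (f a ≤ f b)) a b = true ↔ f a ≤ f b := by
    intro a b; simp
  have hadj : ∀ (x y : {x // x ∈ (s : Set V)}), G.Adj x.1 y.1 ↔
      (c x ≠ c y ∧ (chordSegment (c x).1 ∩ chordSegment (c y).1).Nonempty) := by
    intro x y
    have h1 : G.Adj x.1 y.1 ↔ (G.induce (s : Set V)).Adj x y := by
      simp [SimpleGraph.comap_adj]
    rw [h1, ← φ.map_adj_iff]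
    simp only [SimpleGraph.comap_adj, SimpleGraph.induce]
    rfl
  constructor
  · intro a b _ _
    rcases le_total (f a) (f b) with h' | h'
    · exact Or.inl (by simpa using h')
    · exact Or.inr (by simpa using h')
  · intro a b cc _ _ _ h1 h2
    simp only [decide_eq_true_iff] at h1 h2 ⊢
    exact h1.trans h2
  · intro v hv
    rw [eqvR_iff _ f hR]
    have hv' : v ∈ (s : Set V) := by simpa using hv
    rw [hf0 v hv', hf1 v hv']
    exact ne_of_lt (chord_spec _).2.2.1
  · intro u v hu hv hne
    have hu' : u ∈ (s : Set V) := by simpa using hu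
    have hv' : v ∈ (s : Set V) := by simpa using hv
    rw [crossR_iff _ f hR, hf0 u hu', hf1 u hu', hf0 v hv', hf1 v hv']
    obtain ⟨m1, m2, hlt, _⟩ := chord_spec (c ⟨u, hu'⟩)
    obtain ⟨m1', m2', hlt', _⟩ := chord_spec (c ⟨v, hv'⟩)
    rw [hadj ⟨u, hu'⟩ ⟨v, hv'⟩, ← seg_inter_iff m1 m2 m1' m2' hlt.ne hlt'.ne,
      chord_seg, chord_seg]
    have hcc : c ⟨u, hu'⟩ ≠ c ⟨v, hv'⟩ := by
      intro hq
      exact hne (congrArg Subtype.val (hcinj hq))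
    tauto
  · intro u v hu hv hne
    have hu' : u ∈ (s : Set V) := by simpa using hu
    have hv' : v ∈ (s : Set V) := by simpa using hv
    rw [pairEqvR_iff _ f hR, hf0 u hu', hf1 u hu', hf0 v hv', hf1 v hv',
      ← chord_eq_iff]
    intro hq
    exact hne (congrArg Subtype.val (hcinj hq))

/-! ### Compactness -/

lemma exists_good_all {V : Type} (G : SimpleGraph V)
    (hne : ∀ s : Finset V, ∃ R, Good G s R) : ∃ R, ∀ s : Finset V, Good G s R := by
  classical
  choose Rsel hRsel using hne
  haveI : Filter.NeBot (Filter.atTop : Filter (Finset V)) := Filter.atTop_neBot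
  set U : Ultrafilter (Finset V) := Ultrafilter.of Filter.atTop with hU
  set R : V × Bool → V × Bool → Bool := fun a b =>
    if {s | Rsel s a b = true} ∈ U then true else false with hRdef
  have key : ∀ a b, {s | Rsel s a b = R a b} ∈ U := by
    intro a b
    by_cases hm : {s | Rsel s a b = true} ∈ U
    · have hRab : R a b = true := if_pos hm
      rw [hRab]; exact hm
    · have hRab : R a b = false := if_neg hm
      rw [hRab]
      have hcompl : {s | Rsel s a b = true}ᶜ ∈ U := Ultrafilter.compl_mem_iff_notMem.mpr hm
      have : {s | Rsel s a b = true}ᶜ = {s | Rsel s a b = false} := by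
        ext t; simp [Bool.not_eq_true]
      rwa [this] at hcompl
  refine ⟨R, fun s₀ => ?_⟩
  haveI : Finite {a : V × Bool // a.1 ∈ s₀} := by
    apply Finite.of_injective (fun a => ((⟨a.1.1, a.2⟩ : {x // x ∈ s₀}), a.1.2))
    intro a b hab
    simp only [Subtype.mk.injEq, Prod.mk.injEq] at hab
    exact Subtype.ext (Prod.ext hab.1 hab.2)
  set big : Set (Finset V) := Ici s₀ ∩
    ⋂ (p : {a : V × Bool // a.1 ∈ s₀} × {a : V × Bool // a.1 ∈ s₀}),
      {s | Rsel s p.1.1 p.2.1 = R p.1.1 p.2.1} with hbig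
  have hbigmem : big ∈ U := by
    apply Filter.inter_mem
    · exact (Ultrafilter.of_le Filter.atTop) (Filter.Ici_mem_atTop s₀)
    · rw [Filter.iInter_mem]
      intro p; exact key p.1.1 p.2.1
  obtain ⟨s₁, hs₁⟩ := Filter.nonempty_of_mem hbigmem
  obtain ⟨hle, hagree⟩ := hs₁
  apply good_congr (R := Rsel s₁)
  · intro a b ha hb
    have := Set.mem_iInter.mp hagree (⟨a, ha⟩, ⟨b, hb⟩)
    exact this
  · exact good_mono hle (hRsel s₁)

/-! ### Realization -/

lemma realize {V : Type} [Countable V] (G : SimpleGraph V)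
    (R : V × Bool → V × Bool → Bool) (hg : ∀ s : Finset V, Good G s R) :
    IsCircleGraph G := by
  classical
  have htot : ∀ a b : V × Bool, R a b = true ∨ R b a = true := fun a b =>
    (hg {a.1, b.1}).tot a b (by simp) (by simp)
  have htrans : ∀ a b c : V × Bool, R a b = true → R b c = true → R a c = true :=
    fun a b c => (hg {a.1, b.1, c.1}).trans a b c (by simp) (by simp) (by simp)
  have hrefl : ∀ a : V × Bool, R a a = true := fun a => (htot a a).elim id id
  let sd : Setoid (V × Bool) :=
    ⟨fun a b => R a b = true ∧ R b a = true,
     fun a => ⟨hrefl a, hrefl a⟩,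
     fun h => ⟨h.2, h.1⟩,
     fun h1 h2 => ⟨htrans _ _ _ h1.1 h2.1, htrans _ _ _ h2.2 h1.2⟩⟩
  let Q := Quotient sd
  let le : Q → Q → Prop := Quotient.lift₂ (fun a b => R a b = true)
    (by
      intro a b a' b' ha hb
      apply propext
      constructor
      · intro h; exact htrans _ _ _ ha.2 (htrans _ _ _ h hb.1)
      · intro h; exact htrans _ _ _ ha.1 (htrans _ _ _ h hb.2))
  letI : LinearOrder Q := {
    le := le
    le_refl := fun q => Quotient.inductionOn q (fun a => hrefl a)
    le_trans := fun q1 q2 q3 => Quotient.inductionOn₃ q1 q2 q3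
      (fun a b c h1 h2 => htrans a b c h1 h2)
    le_antisymm := fun q1 q2 => Quotient.inductionOn₂ q1 q2
      (fun a b h1 h2 => Quotient.sound ⟨h1, h2⟩)
    le_total := fun q1 q2 => Quotient.inductionOn₂ q1 q2 (fun a b => htot a b)
    toDecidableLE := fun _ _ => Classical.propDecidable _ }
  obtain ⟨e⟩ := Order.embedding_from_countable_to_dense Q ℚ
  let ang : V × Bool → ℝ := fun a => 2 * Real.arctan (e (Quotient.mk sd a) : ℚ)
  have hang : ∀ a b : V × Bool, R a b = true ↔ ang a ≤ ang b := by
    intro a b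
    constructor
    · intro h
      have h1 : le (Quotient.mk sd a) (Quotient.mk sd b) := h
      have h2 : e (Quotient.mk sd a) ≤ e (Quotient.mk sd b) := e.monotone h1
      have h3 : Real.arctan (e (Quotient.mk sd a) : ℚ) ≤ Real.arctan (e (Quotient.mk sd b) : ℚ) :=
        Real.arctan_strictMono.monotone (by exact_mod_cast h2)
      simpa [ang] using h3
    · intro h
      have h3 : Real.arctan ((e (Quotient.mk sd a) : ℚ) : ℝ)
          ≤ Real.arctan ((e (Quotient.mk sd b) : ℚ) : ℝ) := by
        simp only [ang] at h; linarith
      have h2 : (e (Quotient.mk sd a) : ℚ) ≤ (e (Quotient.mk sd b) : ℚ) := by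
        exact_mod_cast Real.arctan_strictMono.le_iff_le.mp h3
      have h1 : le (Quotient.mk sd a) (Quotient.mk sd b) := e.le_iff_le.mp h2
      exact h1
  have hmem : ∀ a : V × Bool, ang a ∈ Ioc (-π) π := by
    intro a
    constructor
    · have := Real.neg_pi_div_two_lt_arctan ((e (Quotient.mk sd a) : ℚ) : ℝ)
      simp only [ang]; linarith
    · have := Real.arctan_lt_pi_div_two ((e (Quotient.mk sd a) : ℚ) : ℝ)
      simp only [ang]; linarith [Real.pi_pos]
  have hstrict : ∀ v : V, ang (v, false) ≠ ang (v, true) := by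
    intro v
    have h1 := (hg {v}).strict v (by simp)
    rw [eqvR_iff R ang hang] at h1
    exact h1
  have hchordmem : ∀ v : V, (∀ z ∈ s(P (ang (v, false)), P (ang (v, true))), z ∈ S1)
      ∧ ¬ (s(P (ang (v, false)), P (ang (v, true)))).IsDiag := by
    intro v
    constructor
    · intro z hz
      rcases Sym2.mem_iff.mp hz with h | h <;> rw [h] <;> exact P_norm _
    · rw [Sym2.mk_isDiag_iff]
      intro h
      exact hstrict v (P_inj (hmem _) (hmem _) h)
  let chord : V → Chord := fun v =>
    ⟨s(P (ang (v, false)), P (ang (v, true))), hchordmem v⟩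
  have hpe : ∀ u v : V, u ≠ v → ¬ PairEqReal (ang (u, false)) (ang (u, true))
      (ang (v, false)) (ang (v, true)) := by
    intro u v hne hp
    apply (hg {u, v}).inj u v (by simp) (by simp) hne
    rw [pairEqvR_iff R ang hang]
    exact hp
  have hki : Function.Injective chord := by
    intro u v h
    by_contra hne
    apply hpe u v hne
    have h1 : s(P (ang (u, false)), P (ang (u, true)))
        = s(P (ang (v, false)), P (ang (v, true))) := congrArg Subtype.val h
    rcases Sym2.eq_iff.mp h1 with ⟨e1, e2⟩ | ⟨e1, e2⟩
    · exact Or.inl ⟨P_inj (hmem _) (hmem _) e1, P_inj (hmem _) (hmem _) e2⟩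
    · exact Or.inr ⟨P_inj (hmem _) (hmem _) e1, P_inj (hmem _) (hmem _) e2⟩
  have hadj : ∀ u v : V, G.Adj u v ↔ CircleGraph.Adj (chord u) (chord v) := by
    intro u v
    by_cases hne : u = v
    · subst hne
      simp only [SimpleGraph.irrefl, false_iff]
    · rw [(hg {u, v}).adj u v (by simp) (by simp) hne,
        crossR_iff R ang hang u v]
      have hseg : (CircleGraph.Adj (chord u) (chord v)) ↔
          (chord u ≠ chord v ∧
            (segment ℝ (P (ang (u, false))) (P (ang (u, true))) ∩
             segment ℝ (P (ang (v, false))) (P (ang (v, true)))).Nonempty) := Iff.rfl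
      rw [hseg, ← seg_inter_iff (hmem _) (hmem _) (hmem _) (hmem _)
        (hstrict u) (hstrict v)]
      have hcne : chord u ≠ chord v := fun hq => hne (hki hq)
      tauto
  refine ⟨Set.range chord, ⟨{ toEquiv := Equiv.ofInjective chord hki, map_rel_iff' := ?_ }⟩⟩
  intro u v
  rw [SimpleGraph.comap_adj]
  exact (hadj u v).symm

/-- A countable graph all of whose finite induced subgraphs are circle
graphs is itself a circle graph. -/
theorem isCircleGraph_of_finite_subgraphs {V : Type} [Countable V] (G : SimpleGraph V)
    (h : ∀ s : Finset V, IsCircleGraph (G.induce (s : Set V))) :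
    IsCircleGraph G := by
  obtain ⟨R, hR⟩ := exists_good_all G (exists_good G h)
  exact realize G R hR
end
end

section
/- Let R be a graph satisfying the extension property, and let v be a vertex of R. Then the local complementation R_v also satisfies the extension property. -/
noncomputable section

/-- Local complementation of a graph at a vertex `v`: adjacency is complemented within
the neighbourhood of `v` and unchanged elsewhere. -/
def localComplement {V : Type*} (G : SimpleGraph V) (v : V) : SimpleGraph V where
  Adj u w := u ≠ w ∧
    ((G.Adj v u ∧ G.Adj v w ∧ ¬ G.Adj u w) ∨ (¬ (G.Adj v u ∧ G.Adj v w) ∧ G.Adj u w))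
  symm := by
    constructor
    rintro u w ⟨huw, h⟩
    refine ⟨huw.symm, ?_⟩
    rcases h with ⟨h1, h2, h3⟩ | ⟨h1, h2⟩
    · exact Or.inl ⟨h2, h1, fun h' => h3 h'.symm⟩
    · exact Or.inr ⟨fun ⟨a, b⟩ => h1 ⟨b, a⟩, h2.symm⟩
  loopless := by
    constructor
    rintro u ⟨h, -⟩
    exact h rfl

/-- A graph satisfies the extension property (characterising the Rado graph among
countable graphs) if for any two disjoint finite vertex sets `U`, `W` there is a vertex
outside `U ∪ W` adjacent to everything in `U` and to nothing in `W`. -/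
def HasExtensionProperty {V : Type*} (G : SimpleGraph V) : Prop :=
  ∀ U W : Finset V, Disjoint U W →
    ∃ x, x ∉ U ∧ x ∉ W ∧ (∀ u ∈ U, G.Adj x u) ∧ (∀ w ∈ W, ¬ G.Adj x w)

/-- Local complementation preserves the extension property. -/
theorem localComplement_hasExtensionProperty {V : Type*} (G : SimpleGraph V)
    (hG : HasExtensionProperty G) (v : V) :
    HasExtensionProperty (localComplement G v) := by
  classical
  intro U W hUW
  have hdisj : ∀ {a : V}, a ∈ U → a ∈ W → False := fun ha hb =>
    (Finset.disjoint_left.mp hUW ha) hb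
  by_cases hv : v ∈ U
  · -- x must be adjacent to v
    have hvW : v ∉ W := fun h => hdisj hv h
    set A := U.filter (fun u => G.Adj v u) with hA
    set B := U.filter (fun u => ¬ G.Adj v u ∧ u ≠ v) with hB
    set C := W.filter (fun w => G.Adj v w) with hC
    set D := W.filter (fun w => ¬ G.Adj v w) with hD
    have hdis : Disjoint (insert v (B ∪ C)) (A ∪ D) := by
      rw [Finset.disjoint_left]
      intro a ha hb
      simp only [hA, hB, hC, hD, Finset.mem_insert, Finset.mem_union,
        Finset.mem_filter] at ha hb
      rcases ha with rfl | (⟨haU, hna, _⟩ | ⟨haW, haj⟩)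
      · rcases hb with ⟨_, h⟩ | ⟨h, _⟩
        · exact h.ne rfl
        · exact hvW h
      · rcases hb with ⟨_, h⟩ | ⟨h, _⟩
        · exact hna h
        · exact hdisj haU h
      · rcases hb with ⟨h, _⟩ | ⟨_, h⟩
        · exact hdisj h haW
        · exact h haj
    obtain ⟨x, hx1, hx2, hadj, hnadj⟩ := hG _ _ hdis
    have hxv : G.Adj x v := hadj v (Finset.mem_insert_self _ _)
    have hvx : G.Adj v x := hxv.symm
    refine ⟨x, ?_, ?_, ?_, ?_⟩
    · intro hxU
      by_cases h : G.Adj v x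
      · exact hx2 (Finset.mem_union_left _ (Finset.mem_filter.mpr ⟨hxU, h⟩))
      · exact hx1 (Finset.mem_insert_of_mem (Finset.mem_union_left _
          (Finset.mem_filter.mpr ⟨hxU, h, hxv.ne⟩)))
    · intro hxW
      by_cases h : G.Adj v x
      · exact hx1 (Finset.mem_insert_of_mem (Finset.mem_union_right _
          (Finset.mem_filter.mpr ⟨hxW, h⟩)))
      · exact hx2 (Finset.mem_union_right _ (Finset.mem_filter.mpr ⟨hxW, h⟩))
    · intro u hu
      by_cases hu1 : u = v
      · subst hu1
        exact ⟨hxv.ne, Or.inr ⟨fun h => (G.loopless.irrefl _) h.2, hxv⟩⟩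
      by_cases hu2 : G.Adj v u
      · -- u ∈ A ⊆ W', so ¬ G.Adj x u and x ≠ u
        have huA : u ∈ A ∪ D := Finset.mem_union_left _ (Finset.mem_filter.mpr ⟨hu, hu2⟩)
        have hxu : ¬ G.Adj x u := hnadj u huA
        have hne : x ≠ u := fun h => hx2 (h ▸ huA)
        exact ⟨hne, Or.inl ⟨hvx, hu2, hxu⟩⟩
      · have huB : u ∈ insert v (B ∪ C) := Finset.mem_insert_of_mem
          (Finset.mem_union_left _ (Finset.mem_filter.mpr ⟨hu, hu2, hu1⟩))
        have hxu : G.Adj x u := hadj u huB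
        exact ⟨hxu.ne, Or.inr ⟨fun h => hu2 h.2, hxu⟩⟩
    · intro w hw hcontra
      obtain ⟨hne, hcase⟩ := hcontra
      by_cases hw2 : G.Adj v w
      · have hwC : w ∈ insert v (B ∪ C) := Finset.mem_insert_of_mem
          (Finset.mem_union_right _ (Finset.mem_filter.mpr ⟨hw, hw2⟩))
        have hxw : G.Adj x w := hadj w hwC
        rcases hcase with ⟨_, _, h⟩ | ⟨h, _⟩
        · exact h hxw
        · exact h ⟨hvx, hw2⟩
      · have hwD : w ∈ A ∪ D := Finset.mem_union_right _ (Finset.mem_filter.mpr ⟨hw, hw2⟩)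
        have hxw : ¬ G.Adj x w := hnadj w hwD
        rcases hcase with ⟨_, h, _⟩ | ⟨_, h⟩
        · exact hw2 h
        · exact hxw h
  · -- x not adjacent to v : use W' = insert v W
    have hdis : Disjoint U (insert v W) := by
      rw [Finset.disjoint_left]
      intro a ha hb
      rcases Finset.mem_insert.mp hb with rfl | hb
      · exact hv ha
      · exact hdisj ha hb
    obtain ⟨x, hx1, hx2, hadj, hnadj⟩ := hG _ _ hdis
    have hxv : ¬ G.Adj x v := hnadj v (Finset.mem_insert_self _ _)
    have hvx : ¬ G.Adj v x := fun h => hxv h.symm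
    refine ⟨x, hx1, fun h => hx2 (Finset.mem_insert_of_mem h), ?_, ?_⟩
    · intro u hu
      have hxu := hadj u hu
      exact ⟨hxu.ne, Or.inr ⟨fun h => hvx h.1, hxu⟩⟩
    · intro w hw hcontra
      have hxw : ¬ G.Adj x w := hnadj w (Finset.mem_insert_of_mem hw)
      obtain ⟨hne, hcase⟩ := hcontra
      rcases hcase with ⟨h, _, _⟩ | ⟨_, h⟩
      · exact hvx h
      · exact hxw h
end
end

section
/- The canonical map π from the homeomorphism group of S¹ to the automorphism group of the circle graph 𝒞, sending a homeomorphism g to the permutation of chords induced by applying g to endpoints, is an injective group homomorphism. -/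
noncomputable section

open Complex

/-- point on circle at angle θ -/
def epc (θ : ℝ) : ℂ := Complex.exp (θ * Complex.I)

lemma epc_mem (θ : ℝ) : epc θ ∈ S1 := by
  simp [epc, S1, Complex.norm_exp]

lemma epc_int (x : ℝ) (n : ℤ) : epc (x + n*(2*Real.pi)) = epc x := by
  unfold epc
  push_cast
  rw [add_mul, Complex.exp_add]
  rw [show ((n:ℂ) * (2*Real.pi) * I) = n * (2*Real.pi*I) by ring, Complex.exp_int_mul_two_pi_mul_I]
  ring

lemma epc_inj {x y : ℝ} (h : epc x = epc y) : ∃ n : ℤ, x = y + n*(2*Real.pi) := by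
  unfold epc at h
  rw [Complex.exp_eq_exp_iff_exists_int] at h
  obtain ⟨n, hn⟩ := h
  refine ⟨n, ?_⟩
  have h2 : (x:ℂ) * I = ((y + n*(2*Real.pi) : ℝ)) * I := by rw [hn]; push_cast; ring
  exact_mod_cast mul_right_cancel₀ Complex.I_ne_zero h2

lemma epc_surj {z : ℂ} (hz : z ∈ S1) (α : ℝ) : ∃ ε, 0 ≤ ε ∧ ε < 2*Real.pi ∧ z = epc (α + ε) := by
  have hz1 : z = epc (Complex.arg z) := by
    have h2 := Complex.norm_mul_exp_arg_mul_I z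
    have hz' : ‖z‖ = 1 := hz
    rw [hz'] at h2
    simpa [epc] using h2.symm
  obtain ⟨θ, n, hmem, hrel⟩ : ∃ (θ : ℝ) (n : ℤ), θ ∈ Set.Ico α (α + 2*Real.pi) ∧
      θ + n*(2*Real.pi) = Complex.arg z :=
    ⟨toIcoMod Real.two_pi_pos α (Complex.arg z), toIcoDiv Real.two_pi_pos α (Complex.arg z),
      toIcoMod_mem_Ico _ _ _, by
        simpa [zsmul_eq_mul] using toIcoMod_add_toIcoDiv_zsmul Real.two_pi_pos α (Complex.arg z)⟩
  refine ⟨θ - α, by linarith [hmem.1], by linarith [hmem.2], ?_⟩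
  rw [show α + (θ - α) = θ by ring, hz1, ← hrel, epc_int]

lemma epc_ne {x y : ℝ} (h : 0 < y - x) (h2 : y - x < 2*Real.pi) : epc x ≠ epc y := by
  intro hc
  obtain ⟨n, hn⟩ := epc_inj hc
  have : y - x = -(n * (2*Real.pi)) := by linarith
  rcases lt_trichotomy n 0 with hn' | hn' | hn'
  · have : (n:ℝ) ≤ -1 := by exact_mod_cast (by omega : n ≤ -1)
    nlinarith [Real.pi_pos]
  · simp [hn'] at this; linarith
  · have : (1:ℝ) ≤ n := by exact_mod_cast hn'
    nlinarith [Real.pi_pos]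

/-- planar cross product -/
def cross2 (w u : ℂ) : ℝ := w.re * u.im - w.im * u.re

lemma trig1 (u v θ : ℝ) :
    (Real.cos (θ-2*v) - Real.cos (θ-2*u)) * (Real.sin θ - Real.sin (θ-2*u))
      - (Real.sin (θ-2*v) - Real.sin (θ-2*u)) * (Real.cos θ - Real.cos (θ-2*u))
    = 4 * Real.sin (u-v) * Real.sin u * Real.sin v := by
  rw [Real.sin_sub θ (2*u), Real.sin_sub θ (2*v), Real.cos_sub θ (2*u), Real.cos_sub θ (2*v),
    Real.sin_sub u v, Real.sin_two_mul, Real.sin_two_mul,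
    Real.cos_two_mul, Real.cos_two_mul]
  linear_combination (-4*Real.sin v*Real.cos v) * Real.sin_sq_add_cos_sq u
    + (4*Real.sin u*Real.cos u) * Real.sin_sq_add_cos_sq v
    + (4*Real.sin v*Real.cos v - 4*(Real.cos u)^2*Real.sin v*Real.cos v
        - 4*Real.sin u*Real.cos u + 4*Real.sin u*Real.cos u*(Real.cos v)^2) * Real.sin_sq_add_cos_sq θ

lemma cross_epc (α β θ : ℝ) :
    cross2 (epc β - epc α) (epc θ - epc α)
      = 4 * Real.sin ((β-α)/2) * Real.sin ((θ-α)/2) * Real.sin ((θ-β)/2) := by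
  have h := trig1 ((θ-α)/2) ((θ-β)/2) θ
  rw [show θ - 2*((θ-α)/2) = α by ring, show θ - 2*((θ-β)/2) = β by ring,
    show (θ-α)/2 - (θ-β)/2 = (β-α)/2 by ring] at h
  simp only [cross2, epc, Complex.sub_re, Complex.sub_im,
    Complex.exp_ofReal_mul_I_re, Complex.exp_ofReal_mul_I_im]
  linarith [h]

lemma two_pi_pos' : (0:ℝ) < 2*Real.pi := Real.two_pi_pos

lemma sin_half_pos_s10 {ε : ℝ} (h1 : 0 < ε) (h2 : ε < 2*Real.pi) : 0 < Real.sin (ε/2) :=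
  Real.sin_pos_of_pos_of_lt_pi (by linarith) (by linarith)

lemma sin_half_neg_s10 {ε : ℝ} (h1 : -(2*Real.pi) < ε) (h2 : ε < 0) : Real.sin (ε/2) < 0 := by
  have := sin_half_pos_s10 (ε := -ε) (by linarith) (by linarith)
  rw [show (-ε)/2 = -(ε/2) by ring, Real.sin_neg] at this
  linarith

lemma L_neg {α δ ε : ℝ} (hδ1 : 0 < δ) (hδ2 : δ < 2*Real.pi) (h1 : 0 < ε) (h2 : ε < δ) :
    cross2 (epc (α+δ) - epc α) (epc (α+ε) - epc α) < 0 := by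
  rw [cross_epc]
  rw [show (α+δ-α)/2 = δ/2 by ring, show (α+ε-α)/2 = ε/2 by ring,
    show (α+ε-(α+δ))/2 = (ε-δ)/2 by ring]
  have h3 := sin_half_pos_s10 hδ1 hδ2
  have h4 := sin_half_pos_s10 h1 (by linarith)
  have h5 := sin_half_neg_s10 (ε := ε - δ) (by linarith) (by linarith)
  nlinarith [mul_neg_of_pos_of_neg (mul_pos h3 h4) h5]

lemma L_pos {α δ ε : ℝ} (hδ1 : 0 < δ) (hδ2 : δ < 2*Real.pi) (h1 : δ < ε) (h2 : ε < 2*Real.pi) :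
    0 < cross2 (epc (α+δ) - epc α) (epc (α+ε) - epc α) := by
  rw [cross_epc]
  rw [show (α+δ-α)/2 = δ/2 by ring, show (α+ε-α)/2 = ε/2 by ring,
    show (α+ε-(α+δ))/2 = (ε-δ)/2 by ring]
  have h3 := sin_half_pos_s10 hδ1 hδ2
  have h4 := sin_half_pos_s10 (by linarith : (0:ℝ) < ε) h2
  have h5 := sin_half_pos_s10 (ε := ε - δ) (by linarith) (by linarith)
  nlinarith [mul_pos (mul_pos h3 h4) h5]

lemma cross2_seg {c d q : ℂ} (w a : ℂ) (hq : q ∈ segment ℝ c d) :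
    ∃ t, 0 ≤ t ∧ t ≤ 1 ∧
      cross2 w (q - a) = (1-t) * cross2 w (c - a) + t * cross2 w (d - a) := by
  rw [segment_eq_image'] at hq
  obtain ⟨t, ht, rfl⟩ := hq
  refine ⟨t, ht.1, ht.2, ?_⟩
  simp only [cross2, Complex.add_re, Complex.add_im, Complex.sub_re, Complex.sub_im,
    Complex.real_smul, Complex.mul_re, Complex.mul_im, Complex.ofReal_re, Complex.ofReal_im]
  ring

lemma cross2_self_zero (w : ℂ) : cross2 w w = 0 := by simp [cross2]; ring

lemma cross2_zero_right (w : ℂ) : cross2 w 0 = 0 := by simp [cross2]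

lemma cross2_eq_zero_imp {w u : ℂ} (hw : w ≠ 0) (h : cross2 w u = 0) : ∃ s : ℝ, u = s • w := by
  simp only [cross2, sub_eq_zero] at h
  by_cases hre : w.re = 0
  · have him : w.im ≠ 0 := by
      intro h0; exact hw (Complex.ext hre h0)
    refine ⟨u.im / w.im, ?_⟩
    apply Complex.ext
    · simp only [Complex.real_smul, Complex.mul_re, Complex.ofReal_re, Complex.ofReal_im]
      rw [hre] at h ⊢
      field_simp
      rcases mul_eq_zero.mp (by linarith [h] : w.im * u.re = 0) with h' | h'
      · exact absurd h' him
      · simp [h']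
    · simp only [Complex.real_smul, Complex.mul_im, Complex.ofReal_re, Complex.ofReal_im]
      field_simp
      ring
  · refine ⟨u.re / w.re, ?_⟩
    apply Complex.ext
    · simp only [Complex.real_smul, Complex.mul_re, Complex.ofReal_re, Complex.ofReal_im]
      field_simp
      ring
    · simp only [Complex.real_smul, Complex.mul_im, Complex.ofReal_re, Complex.ofReal_im]
      field_simp
      nlinarith [h]

lemma cross2_comb (w a c d : ℂ) (t : ℝ) :
    cross2 w (c + (t:ℂ)*(d-c) - a) = (1-t)*cross2 w (c-a) + t*cross2 w (d-a) := by
  simp only [cross2, Complex.add_re, Complex.add_im, Complex.sub_re, Complex.sub_im,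
    Complex.mul_re, Complex.mul_im, Complex.ofReal_re, Complex.ofReal_im]
  ring

lemma mem_segment_of_coef {a b p : ℂ} {t : ℝ} (ht0 : 0 ≤ t) (ht1 : t ≤ 1)
    (h : p = a + (t:ℂ)*(b-a)) : p ∈ segment ℝ a b := by
  rw [segment_eq_image']
  exact ⟨t, ⟨ht0, ht1⟩, by simp only [Complex.real_smul]; rw [← h]⟩

lemma segments_cross {a b c d : ℂ} (hab : a ≠ b)
    (hLc : cross2 (b-a) (c-a) < 0) (hLd : 0 < cross2 (b-a) (d-a))
    (hMa : 0 < cross2 (d-c) (a-c)) (hMb : cross2 (d-c) (b-c) < 0) :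
    (segment ℝ a b ∩ segment ℝ c d).Nonempty := by
  set Lc := cross2 (b-a) (c-a) with hLcdef
  set Ld := cross2 (b-a) (d-a) with hLddef
  set t := (-Lc)/(Ld - Lc) with htdef
  have hden : 0 < Ld - Lc := by linarith
  have ht0 : 0 ≤ t := div_nonneg (by linarith) hden.le
  have ht1 : t ≤ 1 := by
    rw [div_le_one hden]; linarith
  set p := c + (t:ℂ)*(d-c) with hpdef
  have hp_cd : p ∈ segment ℝ c d := mem_segment_of_coef ht0 ht1 rfl
  have hLp : cross2 (b-a) (p-a) = 0 := by
    rw [hpdef, cross2_comb, ← hLcdef, ← hLddef, htdef]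
    field_simp
    ring
  obtain ⟨s, hs⟩ := cross2_eq_zero_imp (sub_ne_zero.mpr (Ne.symm hab)) hLp
  rw [Complex.real_smul] at hs
  have hp_eq : p = a + (s:ℂ)*(b-a) := by rw [← hs]; ring
  have hMp0 : cross2 (d-c) (p-c) = 0 := by
    rw [hpdef, show c + (t:ℂ)*(d-c) - c = (t:ℂ)*(d-c) by ring]
    simp only [cross2, Complex.mul_re, Complex.mul_im, Complex.ofReal_re, Complex.ofReal_im]
    ring
  have hMp : cross2 (d-c) (p-c) = (1-s)*cross2 (d-c) (a-c) + s*cross2 (d-c) (b-c) := by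
    rw [hp_eq]; exact cross2_comb (d-c) c a b s
  rw [hMp0] at hMp
  have hs0 : 0 ≤ s := by nlinarith
  have hs1 : s ≤ 1 := by nlinarith
  exact ⟨p, mem_segment_of_coef hs0 hs1 hp_eq, hp_cd⟩

lemma segments_disjoint {a b c d : ℂ}
    (hLc : cross2 (b-a) (c-a) < 0) (hLd : cross2 (b-a) (d-a) < 0) :
    ¬ (segment ℝ a b ∩ segment ℝ c d).Nonempty := by
  rintro ⟨q, hq1, hq2⟩
  obtain ⟨t, ht0, ht1, heq⟩ := cross2_seg (b-a) a hq1
  rw [sub_self, cross2_zero_right, cross2_self_zero] at heq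
  obtain ⟨t', ht0', ht1', heq'⟩ := cross2_seg (b-a) a hq2
  have h1 : (1-t')*cross2 (b-a) (c-a) ≤ 0 :=
    mul_nonpos_of_nonneg_of_nonpos (by linarith) hLc.le
  have h2 : t'*cross2 (b-a) (d-a) ≤ 0 :=
    mul_nonpos_of_nonneg_of_nonpos ht0' hLd.le
  have hsum : (1-t')*cross2 (b-a) (c-a) + t'*cross2 (b-a) (d-a) = 0 := by
    rw [← heq']; linarith
  have h3 : (1-t')*cross2 (b-a) (c-a) = 0 := by linarith
  rcases mul_eq_zero.mp h3 with h4 | h4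
  · have ht'1 : t' = 1 := by linarith
    rw [ht'1] at hsum h3
    simp at h3 hsum
    linarith
  · linarith

lemma continuous_epc : Continuous epc := by
  unfold epc
  exact Complex.continuous_exp.comp (Complex.continuous_ofReal.mul continuous_const)

lemma continuous_cross2 (w a : ℂ) : Continuous (fun z : ℂ => cross2 w (z - a)) := by
  unfold cross2
  fun_prop

/-- c and d can be joined inside the circle avoiding a and b -/
def Joined' (a b c d : ℂ) : Prop :=
  ∃ T : Set ℂ, T ⊆ S1 ∧ a ∉ T ∧ b ∉ T ∧ IsPreconnected T ∧ c ∈ T ∧ d ∈ T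

lemma joined'_symm_cd {a b c d : ℂ} (h : Joined' a b c d) : Joined' a b d c := by
  obtain ⟨T, h1, h2, h3, h4, h5, h6⟩ := h; exact ⟨T, h1, h2, h3, h4, h6, h5⟩

lemma joined'_symm_ab {a b c d : ℂ} (h : Joined' a b c d) : Joined' b a c d := by
  obtain ⟨T, h1, h2, h3, h4, h5, h6⟩ := h; exact ⟨T, h1, h3, h2, h4, h5, h6⟩

lemma joined_same_arc {α δ ε₁ ε₂ : ℝ} (hδ1 : 0 < δ) (hδ2 : δ < 2*Real.pi)
    (h1 : ε₁ ∈ Set.Ioo 0 δ) (h2 : ε₂ ∈ Set.Ioo 0 δ) :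
    Joined' (epc α) (epc (α+δ)) (epc (α+ε₁)) (epc (α+ε₂)) := by
  set lo := min ε₁ ε₂ with hlo
  set hi := max ε₁ ε₂ with hhi
  have hlo0 : 0 < lo := lt_min h1.1 h2.1
  have hhiδ : hi < δ := max_lt h1.2 h2.2
  refine ⟨epc '' Set.Icc (α+lo) (α+hi), ?_, ?_, ?_, ?_, ?_, ?_⟩
  · rintro _ ⟨θ, _, rfl⟩; exact epc_mem θ
  · rintro ⟨θ, hθ, hθeq⟩
    exact epc_ne (by linarith [hθ.1] : 0 < θ - α) (by linarith [hθ.2]) hθeq.symm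
  · rintro ⟨θ, hθ, hθeq⟩
    exact epc_ne (by linarith [hθ.2] : 0 < (α+δ) - θ) (by linarith [hθ.1]) hθeq
  · exact isPreconnected_Icc.image epc continuous_epc.continuousOn
  · exact ⟨α+ε₁, ⟨(add_le_add_iff_left α).mpr (min_le_left _ _), (add_le_add_iff_left α).mpr (le_max_left _ _)⟩, rfl⟩
  · exact ⟨α+ε₂, ⟨(add_le_add_iff_left α).mpr (min_le_right _ _), (add_le_add_iff_left α).mpr (le_max_right _ _)⟩, rfl⟩

lemma not_joined_opposite {α δ ε₁ ε₂ : ℝ} (hδ1 : 0 < δ) (hδ2 : δ < 2*Real.pi)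
    (h1 : ε₁ ∈ Set.Ioo 0 δ) (h2 : ε₂ ∈ Set.Ioo δ (2*Real.pi)) :
    ¬ Joined' (epc α) (epc (α+δ)) (epc (α+ε₁)) (epc (α+ε₂)) := by
  rintro ⟨T, hTS, hTa, hTb, hTpc, hTc, hTd⟩
  set w := epc (α+δ) - epc α with hw
  set U := {z : ℂ | cross2 w (z - epc α) < 0} with hU
  set V := {z : ℂ | 0 < cross2 w (z - epc α)} with hV
  have hUopen : IsOpen U := isOpen_lt (continuous_cross2 w (epc α)) continuous_const
  have hVopen : IsOpen V := isOpen_lt continuous_const (continuous_cross2 w (epc α))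
  have hcover : T ⊆ U ∪ V := by
    intro x hx
    obtain ⟨ε, hε0, hε2, rfl⟩ := epc_surj (hTS hx) α
    have hεne0 : ε ≠ 0 := by
      rintro rfl
      rw [show α + 0 = α by ring] at hx
      exact hTa hx
    have hεneδ : ε ≠ δ := by
      rintro rfl
      exact hTb hx
    rcases lt_trichotomy ε δ with h | h | h
    · exact Or.inl (L_neg hδ1 hδ2 (lt_of_le_of_ne hε0 (Ne.symm hεne0)) h)
    · exact absurd h hεneδ
    · exact Or.inr (L_pos hδ1 hδ2 h hε2)
  have hne := hTpc U V hUopen hVopen hcover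
    ⟨epc (α+ε₁), hTc, L_neg hδ1 hδ2 h1.1 h1.2⟩
    ⟨epc (α+ε₂), hTd, L_pos hδ1 hδ2 h2.1 h2.2⟩
  obtain ⟨x, _, hxU, hxV⟩ := hne
  simp only [hU, hV, Set.mem_setOf_eq] at hxU hxV
  linarith

lemma epc_shift (α δ : ℝ) : epc α = epc ((α+δ) + (2*Real.pi - δ)) := by
  rw [show (α+δ) + (2*Real.pi - δ) = α + (1:ℤ)*(2*Real.pi) by push_cast; ring, epc_int]

lemma crossing_epc {α δ ε₁ ε₂ : ℝ} (hδ1 : 0 < δ) (hδ2 : δ < 2*Real.pi)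
    (h1 : ε₁ ∈ Set.Ioo 0 δ) (h2 : ε₂ ∈ Set.Ioo δ (2*Real.pi)) :
    (segment ℝ (epc α) (epc (α+δ)) ∩ segment ℝ (epc (α+ε₁)) (epc (α+ε₂))).Nonempty := by
  have hab : epc α ≠ epc (α+δ) := epc_ne (by linarith) (by linarith)
  apply segments_cross hab
  · exact L_neg hδ1 hδ2 h1.1 h1.2
  · exact L_pos hδ1 hδ2 h2.1 h2.2
  · have e1 : epc (α+ε₂) = epc ((α+ε₁) + (ε₂-ε₁)) := congrArg epc (by ring)
    have e2 : epc α = epc ((α+ε₁) + (2*Real.pi - ε₁)) := by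
      rw [show (α+ε₁) + (2*Real.pi - ε₁) = α + (1:ℤ)*(2*Real.pi) by push_cast; ring, epc_int]
    rw [e1, e2]
    exact L_pos (by linarith [h1.2, h2.1] : 0 < ε₂-ε₁) (by linarith [h1.1, h2.2])
      (by linarith [h2.2]) (by linarith [h1.1])
  · have e1 : epc (α+ε₂) = epc ((α+ε₁) + (ε₂-ε₁)) := congrArg epc (by ring)
    have e2 : epc (α+δ) = epc ((α+ε₁) + (δ-ε₁)) := congrArg epc (by ring)
    rw [e1, e2]
    exact L_neg (by linarith [h1.2, h2.1] : 0 < ε₂-ε₁) (by linarith [h1.1, h2.2])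
      (by linarith [h1.2]) (by linarith [h2.1])

lemma disjoint_low {α δ ε₁ ε₂ : ℝ} (hδ1 : 0 < δ) (hδ2 : δ < 2*Real.pi)
    (h1 : ε₁ ∈ Set.Ioo 0 δ) (h2 : ε₂ ∈ Set.Ioo 0 δ) :
    ¬ (segment ℝ (epc α) (epc (α+δ)) ∩ segment ℝ (epc (α+ε₁)) (epc (α+ε₂))).Nonempty :=
  segments_disjoint (L_neg hδ1 hδ2 h1.1 h1.2) (L_neg hδ1 hδ2 h2.1 h2.2)

lemma disjoint_high {α δ ε₁ ε₂ : ℝ} (hδ1 : 0 < δ) (hδ2 : δ < 2*Real.pi)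
    (h1 : ε₁ ∈ Set.Ioo δ (2*Real.pi)) (h2 : ε₂ ∈ Set.Ioo δ (2*Real.pi)) :
    ¬ (segment ℝ (epc α) (epc (α+δ)) ∩ segment ℝ (epc (α+ε₁)) (epc (α+ε₂))).Nonempty := by
  have e0 : epc α = epc ((α+δ) + (2*Real.pi - δ)) := epc_shift α δ
  have e1 : epc (α+ε₁) = epc ((α+δ) + (ε₁-δ)) := congrArg epc (by ring)
  have e2 : epc (α+ε₂) = epc ((α+δ) + (ε₂-δ)) := congrArg epc (by ring)
  rw [e0, e1, e2, segment_symm]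
  exact disjoint_low (by linarith : (0:ℝ) < 2*Real.pi - δ) (by linarith : 2*Real.pi - δ < 2*Real.pi)
    ⟨by linarith [h1.1], by linarith [h1.2]⟩ ⟨by linarith [h2.1], by linarith [h2.2]⟩

lemma inter_iff {a b c d : ℂ} (ha : a ∈ S1) (hb : b ∈ S1) (hc : c ∈ S1) (hd : d ∈ S1)
    (hab : a ≠ b) (hcd : c ≠ d) :
    (segment ℝ a b ∩ segment ℝ c d).Nonempty ↔
      ((a = c ∨ a = d ∨ b = c ∨ b = d) ∨ ¬ Joined' a b c d) := by
  by_cases hshare : a = c ∨ a = d ∨ b = c ∨ b = d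
  · refine iff_of_true ?_ (Or.inl hshare)
    rcases hshare with h | h | h | h
    · exact ⟨a, left_mem_segment ℝ a b, h ▸ left_mem_segment ℝ c d⟩
    · exact ⟨a, left_mem_segment ℝ a b, h ▸ right_mem_segment ℝ c d⟩
    · exact ⟨b, right_mem_segment ℝ a b, h ▸ left_mem_segment ℝ c d⟩
    · exact ⟨b, right_mem_segment ℝ a b, h ▸ right_mem_segment ℝ c d⟩
  push_neg at hshare
  obtain ⟨hac, had, hbc, hbd⟩ := hshare
  have hz1 : a = epc (Complex.arg a) := by
    have h2 := Complex.norm_mul_exp_arg_mul_I a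
    have ha' : ‖a‖ = 1 := ha
    rw [ha'] at h2
    simpa [epc] using h2.symm
  set α := Complex.arg a with hα
  obtain ⟨δ, hδ0, hδ2, hbεq⟩ := epc_surj hb α
  obtain ⟨ε₁, hε₁0, hε₁2, hcεq⟩ := epc_surj hc α
  obtain ⟨ε₂, hε₂0, hε₂2, hdεq⟩ := epc_surj hd α
  subst hbεq hcεq hdεq
  rw [hz1] at hab hac had ⊢
  clear hz1
  have haepc : epc α = epc (α + 0) := congrArg epc (by ring)
  have hδpos : 0 < δ := by
    rcases lt_or_eq_of_le hδ0 with h | h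
    · exact h
    · exact absurd (by rw [← h, haepc]) hab
  have hε₁pos : 0 < ε₁ := by
    rcases lt_or_eq_of_le hε₁0 with h | h
    · exact h
    · exact absurd (by rw [← h, haepc]) hac
  have hε₂pos : 0 < ε₂ := by
    rcases lt_or_eq_of_le hε₂0 with h | h
    · exact h
    · exact absurd (by rw [← h, haepc]) had
  have hε₁δ : ε₁ ≠ δ := fun h => hbc (congrArg (fun t => epc (α+t)) h.symm)
  have hε₂δ : ε₂ ≠ δ := fun h => hbd (congrArg (fun t => epc (α+t)) h.symm)
  rcases lt_trichotomy ε₁ δ with h1 | h1 | h1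
  · rcases lt_trichotomy ε₂ δ with h2 | h2 | h2
    · -- both low
      refine iff_of_false (disjoint_low hδpos hδ2 ⟨hε₁pos, h1⟩ ⟨hε₂pos, h2⟩) ?_
      rintro ((h | h | h | h) | hnJ)
      · exact hac h
      · exact had h
      · exact hbc h
      · exact hbd h
      · exact hnJ (joined_same_arc hδpos hδ2 ⟨hε₁pos, h1⟩ ⟨hε₂pos, h2⟩)
    · exact absurd h2 hε₂δ
    · -- ε₁ low, ε₂ high
      exact iff_of_true (crossing_epc hδpos hδ2 ⟨hε₁pos, h1⟩ ⟨h2, hε₂2⟩)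
        (Or.inr (not_joined_opposite hδpos hδ2 ⟨hε₁pos, h1⟩ ⟨h2, hε₂2⟩))
  · exact absurd h1 hε₁δ
  · rcases lt_trichotomy ε₂ δ with h2 | h2 | h2
    · -- ε₁ high, ε₂ low
      rw [segment_symm ℝ (epc (α+ε₁)) (epc (α+ε₂))]
      refine iff_of_true (crossing_epc hδpos hδ2 ⟨hε₂pos, h2⟩ ⟨h1, hε₁2⟩) ?_
      exact Or.inr (fun hJ => not_joined_opposite (α := α) hδpos hδ2 ⟨hε₂pos, h2⟩ ⟨h1, hε₁2⟩
        (joined'_symm_cd hJ))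
    · exact absurd h2 hε₂δ
    · -- both high
      refine iff_of_false (disjoint_high hδpos hδ2 ⟨h1, hε₁2⟩ ⟨h2, hε₂2⟩) ?_
      rintro ((h | h | h | h) | hnJ)
      · exact hac h
      · exact had h
      · exact hbc h
      · exact hbd h
      · apply hnJ
        have e0 : epc α = epc ((α+δ) + (2*Real.pi - δ)) := epc_shift α δ
        have e1 : epc (α+ε₁) = epc ((α+δ) + (ε₁-δ)) := congrArg epc (by ring)
        have e2 : epc (α+ε₂) = epc ((α+δ) + (ε₂-δ)) := congrArg epc (by ring)
        rw [e0, e1, e2]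
        exact joined'_symm_ab (joined_same_arc
          (by linarith : (0:ℝ) < 2*Real.pi - δ) (by linarith : 2*Real.pi - δ < 2*Real.pi)
          ⟨by linarith, by linarith⟩ ⟨by linarith, by linarith⟩)


lemma chordSegment_mk (x y : ℂ) : chordSegment s(x, y) = segment ℝ x y := rfl

open Classical in
/-- endpoint action of a circle homeomorphism, as a bare function on ℂ -/
def gfun (g : S1 ≃ₜ S1) : ℂ → ℂ := fun z => if h : z ∈ S1 then (g ⟨z, h⟩ : ℂ) else z

lemma gfun_mem (g : S1 ≃ₜ S1) {z : ℂ} (h : z ∈ S1) : gfun g z ∈ S1 := by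
  simp only [gfun, dif_pos h]
  exact (g ⟨z, h⟩).2

lemma gfun_coe (g : S1 ≃ₜ S1) (a : S1) : gfun g (a : ℂ) = (g a : ℂ) := by
  simp only [gfun, dif_pos a.2]

lemma gfun_symm_apply (g : S1 ≃ₜ S1) {z : ℂ} (h : z ∈ S1) :
    gfun g.symm (gfun g z) = z := by
  have h2 : gfun g z = (g ⟨z, h⟩ : ℂ) := by simp only [gfun, dif_pos h]
  rw [h2]
  have h3 : ((g ⟨z, h⟩ : ℂ)) ∈ S1 := (g ⟨z, h⟩).2
  simp only [gfun, dif_pos h3]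
  have h4 : (⟨(g ⟨z, h⟩ : ℂ), h3⟩ : S1) = g ⟨z, h⟩ := rfl
  rw [h4, Homeomorph.symm_apply_apply]

lemma gfun_inj (g : S1 ≃ₜ S1) {z w : ℂ} (hz : z ∈ S1) (hw : w ∈ S1)
    (h : gfun g z = gfun g w) : z = w := by
  have := congrArg (gfun g.symm) h
  rwa [gfun_symm_apply g hz, gfun_symm_apply g hw] at this

lemma gfun_continuousOn (g : S1 ≃ₜ S1) : ContinuousOn (gfun g) S1 := by
  rw [continuousOn_iff_continuous_restrict]
  have : S1.domRestrict (gfun g) = fun x : S1 => ((g x : ℂ)) := by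
    funext x
    simp only [Set.domRestrict_apply, gfun, dif_pos x.2]
  rw [this]
  exact continuous_subtype_val.comp g.continuous

lemma gfun_trans (f g : S1 ≃ₜ S1) {z : ℂ} (h : z ∈ S1) :
    gfun (f.trans g) z = gfun g (gfun f z) := by
  have h1 : gfun f z = (f ⟨z, h⟩ : ℂ) := by simp only [gfun, dif_pos h]
  have h2 : gfun (f.trans g) z = ((f.trans g) ⟨z, h⟩ : ℂ) := by simp only [gfun, dif_pos h]
  rw [h1, h2]
  have h3 : ((f ⟨z, h⟩ : ℂ)) ∈ S1 := (f ⟨z, h⟩).2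
  simp only [gfun, dif_pos h3]
  rfl

lemma joined'_image (g : S1 ≃ₜ S1) {a b c d : ℂ} (ha : a ∈ S1) (hb : b ∈ S1)
    (h : Joined' a b c d) :
    Joined' (gfun g a) (gfun g b) (gfun g c) (gfun g d) := by
  obtain ⟨T, hTS, hTa, hTb, hTpc, hTc, hTd⟩ := h
  refine ⟨gfun g '' T, ?_, ?_, ?_,
    hTpc.image _ ((gfun_continuousOn g).mono hTS), ⟨c, hTc, rfl⟩, ⟨d, hTd, rfl⟩⟩
  · rintro _ ⟨x, hx, rfl⟩; exact gfun_mem g (hTS hx)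
  · rintro ⟨x, hx, hxe⟩
    exact hTa (by rwa [gfun_inj g (hTS hx) ha hxe] at hx)
  · rintro ⟨x, hx, hxe⟩
    exact hTb (by rwa [gfun_inj g (hTS hx) hb hxe] at hx)

lemma joined'_iff (g : S1 ≃ₜ S1) {a b c d : ℂ} (ha : a ∈ S1) (hb : b ∈ S1)
    (hc : c ∈ S1) (hd : d ∈ S1) :
    Joined' (gfun g a) (gfun g b) (gfun g c) (gfun g d) ↔ Joined' a b c d := by
  constructor
  · intro h
    have := joined'_image g.symm (gfun_mem g ha) (gfun_mem g hb) h
    rwa [gfun_symm_apply g ha, gfun_symm_apply g hb, gfun_symm_apply g hc,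
      gfun_symm_apply g hd] at this
  · exact joined'_image g ha hb

lemma inter_image_iff (g : S1 ≃ₜ S1) {a b c d : ℂ} (ha : a ∈ S1) (hb : b ∈ S1)
    (hc : c ∈ S1) (hd : d ∈ S1) (hab : a ≠ b) (hcd : c ≠ d) :
    (segment ℝ (gfun g a) (gfun g b) ∩ segment ℝ (gfun g c) (gfun g d)).Nonempty ↔
      (segment ℝ a b ∩ segment ℝ c d).Nonempty := by
  rw [inter_iff ha hb hc hd hab hcd,
    inter_iff (gfun_mem g ha) (gfun_mem g hb) (gfun_mem g hc) (gfun_mem g hd)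
      (fun h => hab (gfun_inj g ha hb h)) (fun h => hcd (gfun_inj g hc hd h)),
    joined'_iff g ha hb hc hd]
  constructor
  · rintro (((h | h | h | h) | h))
    · exact Or.inl (Or.inl (gfun_inj g ha hc h))
    · exact Or.inl (Or.inr (Or.inl (gfun_inj g ha hd h)))
    · exact Or.inl (Or.inr (Or.inr (Or.inl (gfun_inj g hb hc h))))
    · exact Or.inl (Or.inr (Or.inr (Or.inr (gfun_inj g hb hd h))))
    · exact Or.inr h
  · rintro (((h | h | h | h) | h))
    · exact Or.inl (Or.inl (congrArg _ h))
    · exact Or.inl (Or.inr (Or.inl (congrArg _ h)))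
    · exact Or.inl (Or.inr (Or.inr (Or.inl (congrArg _ h))))
    · exact Or.inl (Or.inr (Or.inr (Or.inr (congrArg _ h))))
    · exact Or.inr h

lemma chord_repr (C : Chord) : ∃ a b : ℂ, a ∈ S1 ∧ b ∈ S1 ∧ a ≠ b ∧ C.1 = s(a, b) := by
  obtain ⟨p, hp⟩ := C
  induction p using Sym2.ind with
  | _ x y =>
    exact ⟨x, y, hp.1 x (by simp), hp.1 y (by simp),
      fun h => hp.2 (by simp [h]), rfl⟩

lemma chordMap_aux (g : S1 ≃ₜ S1) (p : Sym2 ℂ) (hp : (∀ z ∈ p, z ∈ S1) ∧ ¬ p.IsDiag) :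
    (∀ z ∈ p.map (gfun g), z ∈ S1) ∧ ¬ (p.map (gfun g)).IsDiag := by
  induction p using Sym2.ind with
  | _ x y =>
    have hx := hp.1 x (by simp)
    have hy := hp.1 y (by simp)
    have hxy : x ≠ y := fun h => hp.2 (by simp [h])
    constructor
    · intro z hz
      rw [Sym2.map_pair_eq, Sym2.mem_iff] at hz
      rcases hz with rfl | rfl
      · exact gfun_mem g hx
      · exact gfun_mem g hy
    · rw [Sym2.map_pair_eq]
      intro h
      rw [Sym2.mk_isDiag_iff] at h
      exact hxy (gfun_inj g hx hy h)

def chordMap (g : S1 ≃ₜ S1) (C : Chord) : Chord :=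
  ⟨C.1.map (gfun g), chordMap_aux g C.1 C.2⟩

lemma chordMap_fst (g : S1 ≃ₜ S1) (C : Chord) {a b : ℂ} (h : C.1 = s(a, b)) :
    (chordMap g C).1 = s(gfun g a, gfun g b) := by
  show (C.1.map (gfun g)) = _
  rw [h, Sym2.map_pair_eq]

lemma chordMap_symm_apply (g : S1 ≃ₜ S1) (C : Chord) :
    chordMap g.symm (chordMap g C) = C := by
  obtain ⟨a, b, ha, hb, hab, hC⟩ := chord_repr C
  apply Subtype.ext
  rw [chordMap_fst g.symm _ (chordMap_fst g C hC), hC,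
    gfun_symm_apply g ha, gfun_symm_apply g hb]

lemma chordMap_trans (f g : S1 ≃ₜ S1) (C : Chord) :
    chordMap (f.trans g) C = chordMap g (chordMap f C) := by
  obtain ⟨a, b, ha, hb, hab, hC⟩ := chord_repr C
  apply Subtype.ext
  rw [chordMap_fst (f.trans g) C hC, chordMap_fst g _ (chordMap_fst f C hC),
    gfun_trans f g ha, gfun_trans f g hb]

def chordEquiv (g : S1 ≃ₜ S1) : Chord ≃ Chord where
  toFun := chordMap g
  invFun := chordMap g.symm
  left_inv := chordMap_symm_apply g
  right_inv := fun C => by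
    have := chordMap_symm_apply g.symm C
    rwa [Homeomorph.symm_symm] at this

def circleGraphIso (g : S1 ≃ₜ S1) : CircleGraph ≃g CircleGraph where
  toEquiv := chordEquiv g
  map_rel_iff' := by
    intro C D
    obtain ⟨a, b, ha, hb, hab, hC⟩ := chord_repr C
    obtain ⟨c, d, hc, hd, hcd, hD⟩ := chord_repr D
    show CircleGraph.Adj (chordMap g C) (chordMap g D) ↔ CircleGraph.Adj C D
    show ((chordMap g C ≠ chordMap g D) ∧ (chordSegment (chordMap g C).1 ∩ chordSegment (chordMap g D).1).Nonempty) ↔ ((C ≠ D) ∧ (chordSegment C.1 ∩ chordSegment D.1).Nonempty)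
    rw [chordMap_fst g C hC, chordMap_fst g D hD, hC, hD,
      chordSegment_mk, chordSegment_mk, chordSegment_mk, chordSegment_mk]
    have hne : chordMap g C ≠ chordMap g D ↔ C ≠ D :=
      Function.Injective.ne_iff (Equiv.injective (chordEquiv g))
    rw [hne, inter_image_iff g ha hb hc hd hab hcd]

/-- The canonical map `π` from the homeomorphism group of the circle
to the automorphism group of the circle graph (acting on chords via endpoints) is an
injective group homomorphism. -/
theorem circle_homeo_to_circleGraph_aut_injective :
    ∃ π : (S1 ≃ₜ S1) → (CircleGraph ≃g CircleGraph),
      (∀ (g : S1 ≃ₜ S1) (a b : S1) (C : Chord),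
        C.1 = s((a : ℂ), (b : ℂ)) → (π g C).1 = s((g a : ℂ), (g b : ℂ))) ∧
      (∀ f g : S1 ≃ₜ S1, π (f.trans g) = (π f).trans (π g)) ∧
      Function.Injective π := by
  refine ⟨circleGraphIso, ?_, ?_, ?_⟩
  · intro g a b C hC
    have h := chordMap_fst g C hC
    rw [gfun_coe, gfun_coe] at h
    exact h
  · intro f g
    apply RelIso.ext
    intro C
    exact chordMap_trans f g C
  · intro f g h
    apply Homeomorph.ext
    intro a
    have key : ∀ b : S1, (b : ℂ) ≠ (a : ℂ) → ((f a : ℂ) = g a ∨ (f a : ℂ) = g b) := by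
      intro b hba
      have hmem : ∀ z ∈ s((a : ℂ), (b : ℂ)), z ∈ S1 := by
        intro z hz
        rw [Sym2.mem_iff] at hz
        rcases hz with rfl | rfl
        · exact a.2
        · exact b.2
      have hdiag : ¬ (s((a : ℂ), (b : ℂ))).IsDiag := by
        rw [Sym2.mk_isDiag_iff]
        exact fun hc => hba hc.symm
      set C : Chord := ⟨s((a : ℂ), (b : ℂ)), hmem, hdiag⟩ with hCdef
      have h1 : (chordMap f C).1 = s((f a : ℂ), (f b : ℂ)) := by
        have := chordMap_fst f C rfl
        rwa [gfun_coe, gfun_coe] at this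
      have h2 : (chordMap g C).1 = s((g a : ℂ), (g b : ℂ)) := by
        have := chordMap_fst g C rfl
        rwa [gfun_coe, gfun_coe] at this
      have heq : chordMap f C = chordMap g C := by
        have := congrArg (fun π => π C) (congrArg RelIso.toEquiv h)
        exact this
      rw [heq, h2] at h1
      rw [Sym2.eq_iff] at h1
      rcases h1 with ⟨hh, _⟩ | ⟨_, hh⟩
      · exact Or.inl hh.symm
      · exact Or.inr hh.symm
    have ha0 : (a : ℂ) ≠ 0 := by
      intro hc
      have := a.2
      rw [hc] at this
      simp [S1] at this
    set na : S1 := ⟨-(a : ℂ), by simp [S1]; exact a.2⟩ with hna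
    set ia : S1 := ⟨Complex.I * (a : ℂ), by simp [S1]; exact a.2⟩ with hia
    have hna_ne : (na : ℂ) ≠ (a : ℂ) := by
      simp only [hna]
      intro hc
      apply ha0
      have : (2 : ℂ) * a = 0 := by linear_combination -hc
      simpa using this
    have hia_ne : (ia : ℂ) ≠ (a : ℂ) := by
      simp only [hia]
      intro hc
      apply ha0
      have h2 : (Complex.I - 1) * a = 0 := by linear_combination hc
      rcases mul_eq_zero.mp h2 with h3 | h3
      · exfalso
        have him := congrArg Complex.im h3
        simp at him
      · exact h3
    rcases key na hna_ne with hh | hh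
    · exact Subtype.coe_injective hh
    · rcases key ia hia_ne with hh2 | hh2
      · exact Subtype.coe_injective hh2
      · exfalso
        have h6 : ((g na : ℂ)) = ((g ia : ℂ)) := by rw [← hh, hh2]
        have h7 : na = ia := g.injective (Subtype.coe_injective h6)
        have h3 : -(a : ℂ) = Complex.I * a := congrArg Subtype.val h7
        apply ha0
        have h4 : (Complex.I + 1) * a = 0 := by linear_combination -h3
        rcases mul_eq_zero.mp h4 with h5 | h5
        · exfalso
          have : Complex.I = -1 := by linear_combination h5
          have him := congrArg Complex.im this
          simp at him
        · exact h5
end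
end
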